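/- arXiv:2312.16349 — 5 statements merged into one kernel-verified Lean document; each statement's English description precedes it below -/
import Mathlib

section
/- Let (X_n) be an exchangeable sequence of integrable real random variables on a probability space (Ω, Σ, P). Then the sample averages (X_1 + ... + X_n)/n converge almost surely to E[X_1 | E_∞], where E_∞ is the exchangeable σ-algebra of the sequence. -/
open MeasureTheory ProbabilityTheory Filter Finset Topology

/-- A sequence of random elements is exchangeable if every finite coordinate
permutation leaves the joint distribution unchanged. -/
def Exchangeable {Ω S : Type*} {mΩ : MeasurableSpace Ω} [MeasurableSpace S]
    (P : Measure Ω) (X : ℕ → Ω → S) : Prop :=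
  ∀ (n : ℕ) (σ : Equiv.Perm (Fin n)),
    P.map (fun ω (i : Fin n) => X i ω) = P.map (fun ω (i : Fin n) => X (σ i) ω)

/-- The exchangeable σ-algebra of the sequence: preimages under the whole sequence of
measurable sets of `ℕ → S` invariant under all finite permutations of coordinates. -/
def exchangeableSigma {Ω S : Type*} [MeasurableSpace S] (X : ℕ → Ω → S) :
    MeasurableSpace Ω :=
  MeasurableSpace.generateFrom
    {B | ∃ A : Set (ℕ → S), MeasurableSet A ∧
      (∀ π : Equiv.Perm ℕ, (∃ N, ∀ m ≥ N, π m = m) →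
        (fun s : ℕ → S => fun i => s (π i)) ⁻¹' A = A) ∧
      B = (fun ω i => X i ω) ⁻¹' A}

/-- The tail σ-algebra of the sequence. -/
def tailSigma {Ω S : Type*} [MeasurableSpace S] (X : ℕ → Ω → S) :
    MeasurableSpace Ω :=
  ⨅ n : ℕ, MeasurableSpace.comap (fun ω (k : ℕ) => X (n + k) ω) inferInstance

/-- The left-shift invariant σ-algebra of the sequence. -/
def shiftInvariantSigma {Ω S : Type*} [MeasurableSpace S] (X : ℕ → Ω → S) :
    MeasurableSpace Ω :=
  MeasurableSpace.generateFrom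
    {B | ∃ A : Set (ℕ → S), MeasurableSet A ∧
      (fun s : ℕ → S => fun i => s (i + 1)) ⁻¹' A = A ∧
      B = (fun ω i => X i ω) ⁻¹' A}

/-- `κ` is a regular conditional distribution of `X` given the sub-σ-algebra `𝒢`. -/
def IsRCD {Ω S : Type*} [MeasurableSpace S] {mΩ : MeasurableSpace Ω}
    (P : Measure Ω) (X : Ω → S) (𝒢 : MeasurableSpace Ω)
    (κ : @Kernel Ω S 𝒢 _) : Prop :=
  ∀ B : Set S, MeasurableSet B →
    (fun ω => (κ ω B).toReal) =ᵐ[P]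
      MeasureTheory.condExp 𝒢 P (fun ω => B.indicator (fun _ => (1 : ℝ)) (X ω))

/-- The sequence `X` is conditionally iid given `𝒢`, with kernel `κ`: the conditional
distribution of the sequence given `𝒢` is the infinite product kernel `κ^∞`, expressed
via its finite-dimensional distributions. -/
def CondIIDKernel {Ω S : Type*} [MeasurableSpace S] {mΩ : MeasurableSpace Ω}
    (P : Measure Ω) (X : ℕ → Ω → S) (𝒢 : MeasurableSpace Ω)
    (κ : @Kernel Ω S 𝒢 _) : Prop :=
  ∀ (m : ℕ) (A : Fin m → Set S), (∀ i, MeasurableSet (A i)) →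
    ∀ G : Set Ω, MeasurableSet[𝒢] G →
      P (G ∩ ⋂ i, {ω | X i ω ∈ A i}) = ∫⁻ ω in G, ∏ i, κ ω (A i) ∂P

/-- The sequence `X` is conditionally iid given `𝒢`. -/
def CondIID {Ω S : Type*} [MeasurableSpace S] {mΩ : MeasurableSpace Ω}
    (P : Measure Ω) (X : ℕ → Ω → S) (𝒢 : MeasurableSpace Ω) : Prop :=
  ∃ κ : @Kernel Ω S 𝒢 _, @IsMarkovKernel Ω S 𝒢 _ κ ∧ CondIIDKernel P X 𝒢 κ

/-- `empAvg X B ω n` is the empirical measure `μ_{ω,n}(B)` of the set `B`. -/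
noncomputable def empAvg {Ω S : Type*} (X : ℕ → Ω → S) (B : Set S) (ω : Ω) (n : ℕ) : ℝ :=
  (∑ i ∈ Finset.range n, B.indicator (fun _ => (1 : ℝ)) (X i ω)) / n

/-- A Borel measure is tight if compacts have measure arbitrarily close to full. -/
def IsTightMeasure {S : Type*} [TopologicalSpace S] [MeasurableSpace S]
    (μ : Measure S) : Prop :=
  ∀ ε : ℝ, 0 < ε → ∃ K : Set S, IsCompact K ∧ 1 - ENNReal.ofReal ε < μ K

/-- `μ` is outer regular on compact sets. -/
def OuterRegularOnCompacts {S : Type*} [TopologicalSpace S] [MeasurableSpace S]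
    (μ : Measure S) : Prop :=
  ∀ K : Set S, IsCompact K → μ K = ⨅ O ∈ {O : Set S | IsOpen O ∧ K ⊆ O}, μ O

/-- `μ` is a Radon measure: inner regular with respect to compact sets on Borel sets. -/
def IsRadon {S : Type*} [TopologicalSpace S] [MeasurableSpace S]
    (μ : Measure S) : Prop :=
  ∀ B : Set S, MeasurableSet B → μ B = ⨆ K ∈ {K : Set S | IsCompact K ∧ K ⊆ B}, μ K

set_option linter.unusedSectionVars false
open scoped ENNReal NNReal

namespace SLLNExch

variable {Ω : Type*} [mΩ : MeasurableSpace Ω] {P : Measure Ω} [IsProbabilityMeasure P]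
  {X : ℕ → Ω → ℝ}

/-- The sequence map. -/
def seqMap (X : ℕ → Ω → ℝ) : Ω → (ℕ → ℝ) := fun ω i => X i ω

lemma measurable_seqMap (hX : ∀ n, Measurable (X n)) : Measurable (seqMap X) :=
  measurable_pi_lambda _ hX

/-- Generating sets for the σ-algebra of events invariant under permutations of the first
`n` coordinates. -/
def permSet (X : ℕ → Ω → ℝ) (n : ℕ) : Set (Set Ω) :=
  {B | ∃ A : Set (ℕ → ℝ), MeasurableSet A ∧
    (∀ π : Equiv.Perm ℕ, (∀ m ≥ n, π m = m) →
      (fun s : ℕ → ℝ => fun i => s (π i)) ⁻¹' A = A) ∧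
    B = seqMap X ⁻¹' A}

def permSigma (X : ℕ → Ω → ℝ) (n : ℕ) : MeasurableSpace Ω :=
  MeasurableSpace.generateFrom (permSet X n)

lemma exch_le (X : ℕ → Ω → ℝ) (n : ℕ) : exchangeableSigma X ≤ permSigma X n := by
  refine MeasurableSpace.generateFrom_mono ?_
  rintro B ⟨A, hA, hinv, rfl⟩
  exact ⟨A, hA, fun π hπ => hinv π ⟨n, hπ⟩, rfl⟩

lemma permSigma_le (hX : ∀ n, Measurable (X n)) (n : ℕ) : permSigma X n ≤ mΩ := by
  refine MeasurableSpace.generateFrom_le ?_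
  rintro B ⟨A, hA, -, rfl⟩
  exact measurable_seqMap hX hA

lemma exchSigma_le (hX : ∀ n, Measurable (X n)) : exchangeableSigma X ≤ mΩ :=
  (exch_le X 0).trans (permSigma_le hX 0)

lemma permSigma_antitone : Antitone (permSigma X) := by
  intro m n hmn
  refine MeasurableSpace.generateFrom_mono ?_
  rintro B ⟨A, hA, hinv, rfl⟩
  exact ⟨A, hA, fun π hπ => hinv π (fun k hk => hπ k (hmn.trans hk)), rfl⟩

lemma perm_lt (π : Equiv.Perm ℕ) {n : ℕ} (hπ : ∀ m ≥ n, π m = m) {i : ℕ} (hi : i < n) :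
    π i < n := by
  by_contra h
  push_neg at h
  have h2 : π i = i := π.injective (hπ (π i) h)
  omega

lemma perm_symm_lt (π : Equiv.Perm ℕ) {n : ℕ} (hπ : ∀ m ≥ n, π m = m) {i : ℕ} (hi : i < n) :
    π.symm i < n := by
  by_contra h
  push_neg at h
  have h2 := hπ (π.symm i) h
  rw [Equiv.apply_symm_apply] at h2
  omega

/-- Restriction of a permutation of `ℕ` fixing `[n, ∞)` to a permutation of `Fin n`. -/
def finPerm (π : Equiv.Perm ℕ) {n : ℕ} (hπ : ∀ m ≥ n, π m = m) : Equiv.Perm (Fin n) where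
  toFun i := ⟨π i, perm_lt π hπ i.isLt⟩
  invFun i := ⟨π.symm i, perm_symm_lt π hπ i.isLt⟩
  left_inv i := Fin.ext (by simp)
  right_inv i := Fin.ext (by simp)

/-- Full-sequence exchangeability: the law of the whole sequence is invariant under
finitely supported permutations. -/
lemma map_seqMap_perm (hX : ∀ k, Measurable (X k)) (hexch : Exchangeable P X)
    (π : Equiv.Perm ℕ) {n : ℕ} (hπ : ∀ m ≥ n, π m = m) :
    P.map (fun ω i => X (π i) ω) = P.map (seqMap X) := by
  have hmeas1 : Measurable (fun ω i => X (π i) ω) :=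
    measurable_pi_lambda _ (fun i => hX (π i))
  have hmeas2 := measurable_seqMap hX
  haveI := Measure.isProbabilityMeasure_map (μ := P) hmeas1.aemeasurable
  haveI := Measure.isProbabilityMeasure_map (μ := P) hmeas2.aemeasurable
  refine ext_of_generate_finite (measurableCylinders (fun _ : ℕ => ℝ))
    generateFrom_measurableCylinders.symm isPiSystem_measurableCylinders (fun t ht => ?_)
    (by simp)
  obtain ⟨I, S, hS, rfl⟩ := (mem_measurableCylinders t).1 ht
  set n' : ℕ := max n ((I.sup id) + 1) with hn'
  have hπ' : ∀ m ≥ n', π m = m := fun m hm => hπ m (le_trans (le_max_left _ _) hm)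
  have hI : ∀ i ∈ I, i < n' := fun i hi =>
    lt_of_lt_of_le (Nat.lt_succ_of_le (Finset.le_sup (f := id) hi)) (le_max_right _ _)
  set ρ : (Fin n' → ℝ) → (∀ i : I, ℝ) := fun g i => g ⟨i.1, hI i.1 i.2⟩ with hρ
  have hmρ : Measurable ρ := measurable_pi_lambda _ fun i => measurable_pi_apply _
  have key : ∀ (Y : Ω → ℕ → ℝ),
      (Y ⁻¹' cylinder I S) = (fun ω (j : Fin n') => Y ω j) ⁻¹' (ρ ⁻¹' S) := by
    intro Y; ext ω; exact Iff.rfl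
  have hcylmeas : MeasurableSet (cylinder I S) := MeasurableSet.cylinder (α := fun _ : ℕ => ℝ) I hS
  rw [Measure.map_apply hmeas1 hcylmeas, Measure.map_apply hmeas2 hcylmeas,
    key, key (seqMap X)]
  have hfin1 : Measurable (fun ω (j : Fin n') => X (π j) ω) :=
    measurable_pi_lambda _ fun j => hX _
  have hfin2 : Measurable (fun ω (j : Fin n') => X j ω) :=
    measurable_pi_lambda _ fun j => hX _
  rw [← Measure.map_apply hfin1 (hmρ hS)]
  have e2 : P ((fun ω (j : Fin n') => seqMap X ω j) ⁻¹' (ρ ⁻¹' S))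
      = (P.map (fun ω (j : Fin n') => X j ω)) (ρ ⁻¹' S) :=
    (Measure.map_apply hfin2 (hmρ hS)).symm
  rw [e2]
  exact congrFun (congrArg _ (hexch n' (finPerm π hπ')).symm) _

/-- Precomposition invariance of the law of the sequence. -/
lemma map_precomp (hX : ∀ k, Measurable (X k)) (hexch : Exchangeable P X)
    (π : Equiv.Perm ℕ) {n : ℕ} (hπ : ∀ m ≥ n, π m = m) :
    (P.map (seqMap X)).map (fun s : ℕ → ℝ => fun i => s (π i)) = P.map (seqMap X) := by
  have hT : Measurable (fun s : ℕ → ℝ => fun i => s (π i)) :=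
    measurable_pi_lambda _ fun i => measurable_pi_apply _
  rw [Measure.map_map hT (measurable_seqMap hX)]
  exact map_seqMap_perm hX hexch π hπ

/-- Change of variables for permuted coordinate integrands. -/
lemma integral_indicator_perm (hX : ∀ k, Measurable (X k)) (hexch : Exchangeable P X)
    {A : Set (ℕ → ℝ)} (hA : MeasurableSet A)
    (π : Equiv.Perm ℕ) {n : ℕ} (hπ : ∀ m ≥ n, π m = m)
    (hinv : (fun s : ℕ → ℝ => fun i => s (π i)) ⁻¹' A = A) (i : ℕ) :
    ∫ x, A.indicator (fun s => s i) (seqMap X x) ∂P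
      = ∫ x, A.indicator (fun s => s (π i)) (seqMap X x) ∂P := by
  set T : (ℕ → ℝ) → (ℕ → ℝ) := fun s => fun j => s (π j) with hTdef
  have hT : Measurable T := measurable_pi_lambda _ fun j => measurable_pi_apply _
  have hg : ∀ j : ℕ, Measurable (A.indicator (fun s : ℕ → ℝ => s j)) := fun j =>
    (measurable_pi_apply j).indicator hA
  have h1 : ∫ x, A.indicator (fun s => s i) (seqMap X x) ∂P
      = ∫ s, A.indicator (fun s' => s' i) s ∂(P.map (seqMap X)) :=
    (integral_map (measurable_seqMap hX).aemeasurable (hg i).aestronglyMeasurable).symm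
  have h2 : ∫ s, A.indicator (fun s' => s' i) s ∂(P.map (seqMap X))
      = ∫ s, A.indicator (fun s' => s' i) (T s) ∂(P.map (seqMap X)) := by
    conv_lhs => rw [← map_precomp hX hexch π hπ]
    exact integral_map hT.aemeasurable (hg i).aestronglyMeasurable
  have h3 : (fun s => A.indicator (fun s' => s' i) (T s))
      = fun s => A.indicator (fun s' => s' (π i)) s := by
    funext s
    by_cases hs : s ∈ A
    · have hTs : T s ∈ A := by
        rw [← hinv] at hs; exact hs
      rw [Set.indicator_of_mem hTs, Set.indicator_of_mem hs]
    · have hTs : T s ∉ A := by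
        rw [← hinv] at hs; exact hs
      rw [Set.indicator_of_notMem hTs, Set.indicator_of_notMem hs]
  have h4 : ∫ s, A.indicator (fun s' => s' (π i)) s ∂(P.map (seqMap X))
      = ∫ x, A.indicator (fun s => s (π i)) (seqMap X x) ∂P :=
    integral_map (measurable_seqMap hX).aemeasurable (hg (π i)).aestronglyMeasurable
  rw [h1, h2, h3, h4]

lemma isPiSystem_permSet (n : ℕ) : IsPiSystem (permSet X n) := by
  rintro B₁ ⟨A₁, hA₁, hinv₁, rfl⟩ B₂ ⟨A₂, hA₂, hinv₂, rfl⟩ -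
  refine ⟨A₁ ∩ A₂, hA₁.inter hA₂, fun π hπ => ?_, by rw [Set.preimage_inter]⟩
  rw [Set.preimage_inter, hinv₁ π hπ, hinv₂ π hπ]

/-- Swap lemma for indices below `n`, on `permSigma X n`-measurable sets. -/
lemma setIntegral_swap (hX : ∀ k, Measurable (X k)) (hint : ∀ k, Integrable (X k) P)
    (hexch : Exchangeable P X) {n i : ℕ} (hi : i < n) :
    ∀ ⦃G : Set Ω⦄, MeasurableSet[permSigma X n] G →
      ∫ x in G, X i x ∂P = ∫ x in G, X 0 x ∂P := by
  have hπswap : ∀ m ≥ n, Equiv.swap 0 i m = m := by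
    intro m hm
    exact Equiv.swap_apply_of_ne_of_ne (by omega) (by omega)
  have htot : ∫ x, X i x ∂P = ∫ x, X 0 x ∂P := by
    have h := integral_indicator_perm hX hexch MeasurableSet.univ (Equiv.swap 0 i) hπswap
      (by simp) i
    simpa [Equiv.swap_apply_right, seqMap] using h
  refine MeasurableSpace.induction_on_inter (m := permSigma X n) rfl (isPiSystem_permSet n)
    (by simp) ?_ ?_ ?_
  · -- basic
    rintro B ⟨A, hA, hinv, rfl⟩
    have hGm : MeasurableSet (seqMap X ⁻¹' A) := measurable_seqMap hX hA
    have hrw : ∀ j : ℕ, ∫ x in seqMap X ⁻¹' A, X j x ∂P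
        = ∫ x, A.indicator (fun s => s j) (seqMap X x) ∂P := by
      intro j
      rw [← integral_indicator hGm]
      refine integral_congr_ae (Eventually.of_forall fun x => ?_)
      simp only []
      by_cases hx : seqMap X x ∈ A
      · rw [Set.indicator_of_mem hx, Set.indicator_of_mem (show x ∈ seqMap X ⁻¹' A from hx)]
        rfl
      · rw [Set.indicator_of_notMem hx,
          Set.indicator_of_notMem (show x ∉ seqMap X ⁻¹' A from hx)]
    rw [hrw i, hrw 0]
    have h := integral_indicator_perm hX hexch hA (Equiv.swap 0 i) hπswap
      (hinv _ hπswap) i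
    simpa [Equiv.swap_apply_right] using h
  · -- compl
    intro t ht hC
    have htm : MeasurableSet t := permSigma_le hX n _ ht
    have hi' := (hint i).integrableOn (s := t)
    have h1 : ∫ x in t, X i x ∂P + ∫ x in tᶜ, X i x ∂P = ∫ x, X i x ∂P :=
      integral_add_compl htm (hint i)
    have h2 : ∫ x in t, X 0 x ∂P + ∫ x in tᶜ, X 0 x ∂P = ∫ x, X 0 x ∂P :=
      integral_add_compl htm (hint 0)
    have := htot
    linarith [h1, h2, hC]
  · -- disjoint union
    intro f hdisj hfm hC
    have hfm' : ∀ k, MeasurableSet (f k) := fun k => permSigma_le hX n _ (hfm k)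
    rw [integral_iUnion hfm' hdisj ((hint i).integrableOn),
      integral_iUnion hfm' hdisj ((hint 0).integrableOn)]
    exact tsum_congr fun k => hC k

/-- The empirical average. -/
noncomputable def avg (X : ℕ → Ω → ℝ) (n : ℕ) : Ω → ℝ :=
  fun ω => (∑ i ∈ Finset.range n, X i ω) / n

lemma sum_perm_invariant {n : ℕ} (π : Equiv.Perm ℕ) (hπ : ∀ m ≥ n, π m = m) (s : ℕ → ℝ) :
    ∑ i ∈ Finset.range n, s (π i) = ∑ i ∈ Finset.range n, s i := by
  have himg : (Finset.range n).image (fun i => π i) = Finset.range n := by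
    refine Finset.eq_of_subset_of_card_le ?_ ?_
    · intro j hj
      obtain ⟨i, hi, rfl⟩ := Finset.mem_image.1 hj
      exact Finset.mem_range.2 (perm_lt π hπ (Finset.mem_range.1 hi))
    · rw [Finset.card_image_of_injective _ π.injective]
  conv_rhs => rw [← himg]
  rw [Finset.sum_image (fun a _ b _ h => π.injective h)]

lemma measurable_avg (n : ℕ) : Measurable[permSigma X n] (avg X n) := by
  intro B hB
  set Fn : (ℕ → ℝ) → ℝ := fun s => (∑ i ∈ Finset.range n, s i) / n with hFn
  have hFnm : Measurable Fn :=
    (Finset.measurable_sum _ fun i _ => measurable_pi_apply i).div_const _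
  refine MeasurableSpace.measurableSet_generateFrom ⟨Fn ⁻¹' B, hFnm hB, ?_, rfl⟩
  intro π hπ
  ext s
  simp only [Set.mem_preimage]
  have : Fn (fun i => s (π i)) = Fn s := by
    simp only [hFn]
    rw [sum_perm_invariant π hπ s]
  rw [this]

lemma integrable_avg (hint : ∀ k, Integrable (X k) P) (n : ℕ) : Integrable (avg X n) P :=
  (integrable_finset_sum _ fun i _ => hint i).div_const _

lemma avg_eq_condexp (hX : ∀ k, Measurable (X k)) (hint : ∀ k, Integrable (X k) P)
    (hexch : Exchangeable P X) {n : ℕ} (hn : 1 ≤ n) :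
    avg X n =ᵐ[P] P[X 0 | permSigma X n] := by
  have hm := permSigma_le hX n
  refine ae_eq_condExp_of_forall_setIntegral_eq hm (hint 0)
    (fun s _ _ => (integrable_avg hint n).integrableOn) (fun s hs _ => ?_)
    ((Measurable.stronglyMeasurable (measurable_avg n)).aestronglyMeasurable)
  have hsm : MeasurableSet s := hm _ hs
  have : ∫ x in s, avg X n x ∂P = (∑ i ∈ Finset.range n, ∫ x in s, X i x ∂P) / n := by
    simp only [avg]
    rw [integral_div, integral_finset_sum _ fun i _ => (hint i).integrableOn]
  rw [this]
  have hsum : ∑ i ∈ Finset.range n, ∫ x in s, X i x ∂P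
      = n * ∫ x in s, X 0 x ∂P := by
    rw [Finset.sum_congr rfl fun i hi =>
      setIntegral_swap hX hint hexch (Finset.mem_range.1 hi) hs]
    simp [Finset.sum_const, Finset.card_range]
  rw [hsum]
  field_simp

/-! ### The reversed martingale -/

def revIdx (N k : ℕ) : ℕ := max (N - k) 1

noncomputable def revM (X : ℕ → Ω → ℝ) (N : ℕ) : ℕ → Ω → ℝ :=
  fun k => avg X (revIdx N k)

def revFil (hX : ∀ k, Measurable (X k)) (N : ℕ) : Filtration ℕ mΩ where
  seq := fun k => permSigma X (revIdx N k)
  mono' := fun i j hij => permSigma_antitone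
    (max_le_max (Nat.sub_le_sub_left hij N) le_rfl)
  le' := fun k => permSigma_le hX _

lemma revM_martingale (hX : ∀ k, Measurable (X k)) (hint : ∀ k, Integrable (X k) P)
    (hexch : Exchangeable P X) (N : ℕ) :
    Martingale (revM X N) (revFil hX N) P := by
  constructor
  · exact fun k => Measurable.stronglyMeasurable (measurable_avg _)
  · intro i j hij
    have h1 : revIdx N j ≤ revIdx N i := max_le_max (Nat.sub_le_sub_left hij N) le_rfl
    have hj1 : 1 ≤ revIdx N j := le_max_right _ _
    have hi1 : 1 ≤ revIdx N i := le_max_right _ _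
    calc P[revM X N j | (revFil hX N) i]
        =ᵐ[P] P[P[X 0 | permSigma X (revIdx N j)] | permSigma X (revIdx N i)] :=
          condExp_congr_ae (avg_eq_condexp hX hint hexch hj1)
      _ =ᵐ[P] P[X 0 | permSigma X (revIdx N i)] :=
          condExp_condExp_of_le (permSigma_antitone h1) (permSigma_le hX _)
      _ =ᵐ[P] revM X N i := (avg_eq_condexp hX hint hexch hi1).symm

lemma avg_one (ω : Ω) : avg X 1 ω = X 0 ω := by
  simp [avg]

/-- Doob's upcrossing bound for the reversed martingale. -/
lemma lintegral_upcb_le (hX : ∀ k, Measurable (X k)) (hint : ∀ k, Integrable (X k) P)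
    (hexch : Exchangeable P X) {a b : ℝ} (hab : a < b) (N : ℕ) :
    ∫⁻ ω, (upcrossingsBefore a b (revM X N) N ω : ℝ≥0∞) ∂P
      ≤ ENNReal.ofReal ((∫ ω, |X 0 ω| ∂P + |a|) / (b - a)) := by
  have hsub := (revM_martingale hX hint hexch N).submartingale
  have hDoob := Submartingale.mul_integral_upcrossingsBefore_le_integral_pos_part a b hsub N
  have hNN : revM X N N = avg X 1 := by
    simp [revM, revIdx]
  have hposint : Integrable (fun ω => (revM X N N ω - a)⁺) P := by
    have h := ((integrable_avg hint 1).sub (integrable_const a)).pos_part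
    refine h.congr (Eventually.of_forall fun ω => ?_)
    show (avg X 1 ω - a) ⊔ 0 = (revM X N N ω - a)⁺
    rw [hNN, posPart_def]
  have hRHS : ∫ ω, (revM X N N ω - a)⁺ ∂P ≤ ∫ ω, |X 0 ω| ∂P + |a| := by
    have h1 : ∫ ω, (|X 0 ω| + |a|) ∂P = ∫ ω, |X 0 ω| ∂P + |a| := by
      rw [integral_add (hint 0).abs (integrable_const _), integral_const]
      simp
    rw [← h1]
    refine integral_mono hposint (((hint 0).abs.add (integrable_const _))) ?_
    intro ω
    show (revM X N N ω - a)⁺ ≤ |X 0 ω| + |a|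
    rw [hNN, avg_one, posPart_def]
    calc (X 0 ω - a) ⊔ 0 ≤ |X 0 ω - a| := by
          rcases le_or_gt (X 0 ω - a) 0 with h | h
          · rw [sup_eq_right.2 h]; exact abs_nonneg _
          · rw [sup_eq_left.2 h.le]; exact le_abs_self _
      _ ≤ |X 0 ω| + |a| := (abs_sub _ _)
  have hmeas : Measurable (upcrossingsBefore a b (revM X N) N) :=
    (revM_martingale hX hint hexch N).stronglyAdapted.measurable_upcrossingsBefore hab
  have hintU : Integrable (fun ω => (upcrossingsBefore a b (revM X N) N ω : ℝ)) P := by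
    refine Integrable.mono' (integrable_const (N : ℝ))
      ((measurable_from_top.comp hmeas : Measurable fun ω =>
        ((upcrossingsBefore a b (revM X N) N ω : ℕ) : ℝ))).aestronglyMeasurable ?_
    · exact Eventually.of_forall fun ω => by
        rw [Real.norm_eq_abs, abs_of_nonneg (by positivity)]
        exact_mod_cast upcrossingsBefore_le (revM X N) ω hab
  have hET : ∫ ω, (upcrossingsBefore a b (revM X N) N ω : ℝ) ∂P
      ≤ (∫ ω, |X 0 ω| ∂P + |a|) / (b - a) := by
    rw [le_div_iff₀ (sub_pos.2 hab), mul_comm]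
    exact le_trans hDoob hRHS
  calc ∫⁻ ω, (upcrossingsBefore a b (revM X N) N ω : ℝ≥0∞) ∂P
      = ENNReal.ofReal (∫ ω, (upcrossingsBefore a b (revM X N) N ω : ℝ) ∂P) := by
        rw [ofReal_integral_eq_lintegral_ofReal hintU
          (Eventually.of_forall fun ω => by positivity)]
        refine lintegral_congr fun ω => ?_
        rw [ENNReal.ofReal_natCast]
    _ ≤ _ := ENNReal.ofReal_le_ofReal hET

/-! ### Deterministic crossing lemmas -/

lemma hittingBtwn_offset_le {f f' : ℕ → Ω → ℝ} {ω : Ω} {d : ℕ}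
    (hff' : ∀ k, f' (k + d) ω = f k ω) {s : Set ℝ} {c c' N : ℕ} (hc : c' ≤ c + d) :
    hittingBtwn f' s c' (N + d) ω ≤ hittingBtwn f s c N ω + d := by
  rcases le_or_gt c N with hcN | hcN
  · by_cases hex : ∃ j ∈ Set.Icc c N, f j ω ∈ s
    · have h1 := hittingBtwn_mem_Icc (u := f) (s := s) (n := c) (m := N) hcN ω
      have h2 := hittingBtwn_mem_set (u := f) (s := s) hex
      refine hittingBtwn_le_of_mem ?_ ?_ ?_
      · have := h1.1
        omega
      · have := h1.2
        omega
      · rw [hff']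
        exact h2
    · have hval : hittingBtwn f s c N ω = N := by
        simp only [hittingBtwn, if_neg hex]
      rw [hval]
      exact hittingBtwn_le ω
  · rw [hittingBtwn_of_lt hcN]
    exact hittingBtwn_le ω

lemma uct_offset_shift {f f' : ℕ → Ω → ℝ} {ω : Ω} {d N : ℕ} {a b : ℝ}
    (hff' : ∀ k, f' (k + d) ω = f k ω)
    (hbase : upperCrossingTime a b f' (N + d) 1 ω ≤ d) :
    ∀ n, upperCrossingTime a b f' (N + d) (n + 1) ω ≤ upperCrossingTime a b f N n ω + d := by
  intro n
  induction n with
  | zero => simpa using hbase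
  | succ n ih =>
    have hlow : lowerCrossingTimeAux a f' (upperCrossingTime a b f' (N + d) (n + 1) ω)
        (N + d) ω ≤ lowerCrossingTimeAux a f (upperCrossingTime a b f N n ω) N ω + d :=
      hittingBtwn_offset_le hff' ih
    rw [upperCrossingTime_succ (n := n + 1), upperCrossingTime_succ (n := n)]
    exact hittingBtwn_offset_le hff' hlow

lemma uct_offset_same {f f' : ℕ → Ω → ℝ} {ω : Ω} {d N : ℕ} {a b : ℝ}
    (hff' : ∀ k, f' (k + d) ω = f k ω) :
    ∀ n, upperCrossingTime a b f' (N + d) n ω ≤ upperCrossingTime a b f N n ω + d := by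
  intro n
  induction n with
  | zero => simp
  | succ n ih =>
    have hlow : lowerCrossingTimeAux a f' (upperCrossingTime a b f' (N + d) n ω)
        (N + d) ω ≤ lowerCrossingTimeAux a f (upperCrossingTime a b f N n ω) N ω + d :=
      hittingBtwn_offset_le hff' ih
    rw [upperCrossingTime_succ (n := n), upperCrossingTime_succ (n := n)]
    exact hittingBtwn_offset_le hff' hlow

lemma ucb_offset_le {f f' : ℕ → Ω → ℝ} {ω : Ω} {d N : ℕ} {a b : ℝ} (hab : a < b)
    (hff' : ∀ k, f' (k + d) ω = f k ω) :
    upcrossingsBefore a b f N ω ≤ upcrossingsBefore a b f' (N + d) ω := by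
  by_cases hN : N = 0
  · subst hN
    rw [upcrossingsBefore_zero]
    exact Nat.zero_le _
  have hsub : {n | upperCrossingTime a b f N n ω < N}
      ⊆ {n | upperCrossingTime a b f' (N + d) n ω < N + d} := by
    intro n hn
    have := uct_offset_same (N := N) (a := a) (b := b) hff' n
    simp only [Set.mem_setOf_eq] at hn ⊢
    omega
  refine csSup_le_csSup (upperCrossingTime_lt_bddAbove hab) ?_ hsub
  refine ⟨0, ?_⟩
  simp only [Set.mem_setOf_eq, upperCrossingTime_zero]
  exact Nat.pos_of_ne_zero hN

lemma revM_shift {N d k : ℕ} (hdN : d ≤ N + d) (ω : Ω) :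
    revM X (N + d) (k + d) ω = revM X N k ω := by
  have : N + d - (k + d) = N - k := by omega
  simp [revM, revIdx, this]

/-- `upcrossingsBefore` of the reversed process is monotone in the reversal point. -/
lemma ucb_rev_mono {a b : ℝ} (hab : a < b) (ω : Ω) {N N' : ℕ} (h : N ≤ N') :
    upcrossingsBefore a b (revM X N) N ω ≤ upcrossingsBefore a b (revM X N') N' ω := by
  obtain ⟨d, rfl⟩ := Nat.exists_eq_add_of_le h
  exact ucb_offset_le hab (fun k => revM_shift (by omega) ω)

/-- Strict increase of the reversed upcrossing count when a new downcrossing occurs. -/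
lemma ucb_rev_succ {a b : ℝ} (hab : a < b) (ω : Ω) {N t s₀ : ℕ} (hN : 1 ≤ N)
    (hNt : N < t) (hts : t < s₀)
    (ht : b < avg X t ω) (hs : avg X s₀ ω < a) :
    upcrossingsBefore a b (revM X N) N ω + 1
      ≤ upcrossingsBefore a b (revM X s₀) s₀ ω := by
  set d := s₀ - N with hd
  have hNd : N + d = s₀ := by omega
  have hff' : ∀ k, revM X s₀ (k + d) ω = revM X N k ω := by
    intro k
    rw [← hNd]
    exact revM_shift (by omega) ω
  have hg0 : revM X s₀ 0 ω < a := by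
    have : revIdx s₀ 0 = s₀ := by
      rw [revIdx, Nat.sub_zero]
      exact max_eq_left (by omega)
    rw [revM, this]
    exact hs
  have hgt : b < revM X s₀ (s₀ - t) ω := by
    have h1 : s₀ - (s₀ - t) = t := by omega
    have : revIdx s₀ (s₀ - t) = t := by
      rw [revIdx, h1]
      exact max_eq_left (by omega)
    rw [revM, this]
    exact ht
  have hbase : upperCrossingTime a b (revM X s₀) s₀ 1 ω ≤ d := by
    rw [show (1 : ℕ) = 0 + 1 from rfl, upperCrossingTime_succ]
    have hlow : lowerCrossingTimeAux a (revM X s₀)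
        (upperCrossingTime a b (revM X s₀) s₀ 0 ω) s₀ ω = 0 := by
      have h0 : upperCrossingTime a b (revM X s₀) s₀ 0 ω = 0 := by
        simp
      rw [h0]
      refine le_antisymm ?_ (Nat.zero_le _)
      exact hittingBtwn_le_of_mem le_rfl (Nat.zero_le _) hg0.le
    rw [hlow]
    refine le_trans (hittingBtwn_le_of_mem (Nat.zero_le _) (Nat.sub_le _ _) hgt.le) ?_
    omega
  have hbase' : upperCrossingTime a b (revM X s₀) (N + d) 1 ω ≤ d := by
    rw [hNd]
    exact hbase
  have hshift := uct_offset_shift (f := revM X N) (f' := revM X s₀) (ω := ω) (d := d)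
    (N := N) (a := a) (b := b) hff' hbase'
  set K := upcrossingsBefore a b (revM X N) N ω with hK
  have hKlt : upperCrossingTime a b (revM X N) N K ω < N :=
    upperCrossingTime_lt_of_le_upcrossingsBefore (by omega) hab le_rfl
  have hnew : upperCrossingTime a b (revM X s₀) s₀ (K + 1) ω < s₀ := by
    have := hshift K
    rw [hNd] at this
    omega
  exact le_csSup (upperCrossingTime_lt_bddAbove hab) hnew

/-- Unboundedness of reversed upcrossings from frequent visits below `a` and above `b`. -/
lemma ucb_rev_unbounded {a b : ℝ} (hab : a < b) (ω : Ω)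
    (h₁ : ∃ᶠ n in atTop, avg X n ω < a) (h₂ : ∃ᶠ n in atTop, b < avg X n ω) :
    ∀ K : ℕ, ∃ N, 1 ≤ N ∧ K ≤ upcrossingsBefore a b (revM X N) N ω := by
  intro K
  induction K with
  | zero =>
    obtain ⟨N, hN1, -⟩ := (frequently_atTop.1 h₁) 1
    exact ⟨N, hN1, Nat.zero_le _⟩
  | succ K ih =>
    obtain ⟨N, hN1, hKN⟩ := ih
    obtain ⟨t, ht1, ht2⟩ := (frequently_atTop.1 h₂) (N + 1)
    obtain ⟨s₀, hs1, hs2⟩ := (frequently_atTop.1 h₁) (t + 1)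
    refine ⟨s₀, by omega, ?_⟩
    have h := ucb_rev_succ hab ω hN1 (by omega) (by omega) ht2 hs2
    omega

lemma measurable_avg_amb (hX : ∀ k, Measurable (X k)) (n : ℕ) : Measurable (avg X n) :=
  (Finset.measurable_sum _ fun i _ => hX i).div_const _

lemma exists_ae_tendsto (hX : ∀ k, Measurable (X k)) (hint : ∀ k, Integrable (X k) P)
    (hexch : Exchangeable P X) :
    ∀ᵐ ω ∂P, ∃ c, Tendsto (fun n => avg X n ω) atTop (𝓝 c) := by
  set R : ℝ≥0 := (eLpNorm (X 0) 1 P).toNNReal with hR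
  have hX0 : eLpNorm (X 0) 1 P ≤ (R : ℝ≥0∞) := by
    rw [hR, ENNReal.coe_toNNReal (memLp_one_iff_integrable.2 (hint 0)).eLpNorm_ne_top]
  have hbdd : ∀ n, eLpNorm (avg X n) 1 P ≤ (R : ℝ≥0∞) := by
    intro n
    rcases Nat.eq_zero_or_pos n with rfl | hn
    · have h0 : avg X 0 = fun _ : Ω => (0 : ℝ) := by
        funext ω
        simp [avg]
      rw [h0]
      simp
    · calc eLpNorm (avg X n) 1 P = eLpNorm (P[X 0|permSigma X n]) 1 P :=
          eLpNorm_congr_ae (avg_eq_condexp hX hint hexch hn)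
      _ ≤ eLpNorm (X 0) 1 P := eLpNorm_one_condExp_le_eLpNorm _
      _ ≤ _ := hX0
  have hlim := ae_bdd_liminf_atTop_of_eLpNorm_bdd (μ := P) one_ne_zero
    (f := fun n => avg X n) (fun n => measurable_avg_amb hX n) hbdd
  have hcross : ∀ᵐ ω ∂P, ∀ (p q : ℚ), p < q →
      ¬((∃ᶠ n in atTop, avg X n ω < (p : ℝ)) ∧ (∃ᶠ n in atTop, (q : ℝ) < avg X n ω)) := by
    rw [ae_all_iff]
    intro p
    rw [ae_all_iff]
    intro q
    rcases lt_or_ge p q with hpq | hpq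
    swap
    · exact Eventually.of_forall fun ω hlt => absurd hlt (not_lt.2 hpq)
    have hab : (p : ℝ) < q := by exact_mod_cast hpq
    have hmeasU : ∀ N : ℕ, Measurable fun ω =>
        ((upcrossingsBefore (p : ℝ) (q : ℝ) (revM X N) N ω : ℕ) : ℝ≥0∞) := fun N =>
      measurable_from_top.comp
        ((revM_martingale hX hint hexch N).stronglyAdapted.measurable_upcrossingsBefore hab)
    have hfin : ∀ᵐ ω ∂P,
        (⨆ N, ((upcrossingsBefore (p : ℝ) (q : ℝ) (revM X N) N ω : ℕ) : ℝ≥0∞)) < ∞ := by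
      refine ae_lt_top (Measurable.iSup hmeasU) ?_
      have hmono : Monotone fun N => fun ω =>
          ((upcrossingsBefore (p : ℝ) (q : ℝ) (revM X N) N ω : ℕ) : ℝ≥0∞) := by
        intro N M hNM ω
        exact Nat.cast_le.2 (ucb_rev_mono hab ω hNM)
      rw [lintegral_iSup hmeasU hmono]
      exact ne_of_lt (lt_of_le_of_lt
        (iSup_le fun N => lintegral_upcb_le hX hint hexch hab N) ENNReal.ofReal_lt_top)
    filter_upwards [hfin] with ω hω
    intro _ hfreq
    have hub := ucb_rev_unbounded hab ω hfreq.1 hfreq.2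
    obtain ⟨K, hK⟩ := ENNReal.exists_nat_gt hω.ne
    obtain ⟨N, -, hN⟩ := hub K
    have hle : (K : ℝ≥0∞) ≤
        ⨆ N, ((upcrossingsBefore (p : ℝ) (q : ℝ) (revM X N) N ω : ℕ) : ℝ≥0∞) :=
      le_iSup_of_le N (by exact_mod_cast hN)
    exact absurd hle (not_le.2 hK)
  filter_upwards [hlim, hcross] with ω h₁ h₂
  by_cases h : IsBoundedUnder (· ≤ ·) atTop fun n => |avg X n ω|
  · rw [isBoundedUnder_le_abs] at h
    refine tendsto_of_no_upcrossings Rat.denseRange_cast ?_ h.1 h.2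
    rintro _ ⟨p, rfl⟩ _ ⟨q, rfl⟩ hpq
    exact h₂ p q (by exact_mod_cast hpq)
  · obtain ⟨p, q, hpq, hf₁, hf₂⟩ := ENNReal.exists_upcrossings_of_not_bounded_under h₁.ne h
    exact absurd ⟨hf₁, hf₂⟩ (h₂ p q hpq)

/-! ### The limit function -/

noncomputable def limF : (ℕ → ℝ) → ℝ :=
  fun s => limsup (fun n => (∑ i ∈ Finset.range n, s i) / n) atTop

noncomputable def limFun (X : ℕ → Ω → ℝ) : Ω → ℝ := fun ω => limF (seqMap X ω)

lemma limFun_eq (ω : Ω) : limFun X ω = limsup (fun n => avg X n ω) atTop := rfl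

lemma measurable_limF : Measurable limF :=
  Measurable.limsup fun n =>
    (Finset.measurable_sum _ fun i _ => measurable_pi_apply i).div_const _

lemma measurable_limFun_exch : Measurable[exchangeableSigma X] (limFun X) := by
  intro B hB
  refine MeasurableSpace.measurableSet_generateFrom ⟨limF ⁻¹' B, measurable_limF hB, ?_, rfl⟩
  rintro π ⟨N₀, hπ⟩
  ext s
  simp only [Set.mem_preimage]
  have : limF (fun i => s (π i)) = limF s := by
    refine limsup_congr ?_
    filter_upwards [eventually_ge_atTop N₀] with n hn
    have hπ' : ∀ m ≥ n, π m = m := fun m hm => hπ m (le_trans hn hm)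
    rw [sum_perm_invariant π hπ' s]
  rw [this]

lemma ae_tendsto_limFun (hX : ∀ k, Measurable (X k)) (hint : ∀ k, Integrable (X k) P)
    (hexch : Exchangeable P X) :
    ∀ᵐ ω ∂P, Tendsto (fun n => avg X n ω) atTop (𝓝 (limFun X ω)) := by
  filter_upwards [exists_ae_tendsto hX hint hexch] with ω hc
  obtain ⟨c, hc⟩ := hc
  have h : limFun X ω = c := by
    rw [limFun_eq]
    exact hc.limsup_eq
  rw [h]
  exact hc

lemma integrable_limFun (hX : ∀ k, Measurable (X k)) (hint : ∀ k, Integrable (X k) P)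
    (hexch : Exchangeable P X) : Integrable (limFun X) P := by
  have hmeas : Measurable (limFun X) := measurable_limF.comp (measurable_seqMap hX)
  refine ⟨hmeas.aestronglyMeasurable, ?_⟩
  have h1 : ∀ᵐ ω ∂P, (‖limFun X ω‖₊ : ℝ≥0∞)
      = liminf (fun n => (‖avg X n ω‖₊ : ℝ≥0∞)) atTop := by
    filter_upwards [ae_tendsto_limFun hX hint hexch] with ω hc
    exact (ENNReal.tendsto_coe.2 hc.nnnorm).liminf_eq.symm
  show (∫⁻ a, (‖limFun X a‖₊ : ℝ≥0∞) ∂P) < ∞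
  rw [lintegral_congr_ae h1]
  set R : ℝ≥0 := (eLpNorm (X 0) 1 P).toNNReal with hR
  have hX0 : eLpNorm (X 0) 1 P ≤ (R : ℝ≥0∞) := by
    rw [hR, ENNReal.coe_toNNReal (memLp_one_iff_integrable.2 (hint 0)).eLpNorm_ne_top]
  have hbdd : ∀ n, eLpNorm (avg X n) 1 P ≤ (R : ℝ≥0∞) := by
    intro n
    rcases Nat.eq_zero_or_pos n with rfl | hn
    · have h0 : avg X 0 = fun _ : Ω => (0 : ℝ) := by
        funext ω
        simp [avg]
      rw [h0]
      simp
    · calc eLpNorm (avg X n) 1 P = eLpNorm (P[X 0|permSigma X n]) 1 P :=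
          eLpNorm_congr_ae (avg_eq_condexp hX hint hexch hn)
      _ ≤ eLpNorm (X 0) 1 P := eLpNorm_one_condExp_le_eLpNorm _
      _ ≤ _ := hX0
  refine lt_of_le_of_lt (lintegral_liminf_le fun n =>
    (measurable_avg_amb hX n).nnnorm.coe_nnreal_ennreal) ?_
  refine lt_of_le_of_lt (liminf_le_of_frequently_le'
    (Frequently.of_forall fun n => ?_)) (ENNReal.coe_lt_top (r := R))
  have := hbdd n
  rw [eLpNorm_one_eq_lintegral_enorm] at this
  exact this

lemma limFun_eq_condexp (hX : ∀ k, Measurable (X k)) (hint : ∀ k, Integrable (X k) P)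
    (hexch : Exchangeable P X) :
    limFun X =ᵐ[P] P[X 0 | exchangeableSigma X] := by
  have hm := exchSigma_le hX
  refine ae_eq_condExp_of_forall_setIntegral_eq hm (hint 0)
    (fun s _ _ => (integrable_limFun hX hint hexch).integrableOn) (fun s hs _ => ?_)
    ((Measurable.stronglyMeasurable measurable_limFun_exch).aestronglyMeasurable)
  set F : ℕ → Ω → ℝ := fun n => P[X 0|permSigma X (n + 1)] with hF
  have hFae : ∀ᵐ ω ∂P, ∀ n, F n ω = avg X (n + 1) ω :=
    ae_all_iff.2 fun n =>
      (avg_eq_condexp hX hint hexch (Nat.succ_le_succ (Nat.zero_le n))).symm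
  have hFtend : ∀ᵐ ω ∂P, Tendsto (fun n => F n ω) atTop (𝓝 (limFun X ω)) := by
    filter_upwards [hFae, ae_tendsto_limFun hX hint hexch] with ω h1 h2
    have he : (fun n => F n ω) = fun n => avg X (n + 1) ω := funext h1
    rw [he]
    exact h2.comp (tendsto_add_atTop_nat 1)
  have hFmeas : ∀ n, AEStronglyMeasurable (F n) P := fun n =>
    (stronglyMeasurable_condExp.mono (permSigma_le hX (n + 1))).aestronglyMeasurable
  have hUI : UniformIntegrable F 1 P :=
    (hint 0).uniformIntegrable_condExp fun n => permSigma_le hX (n + 1)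
  have hmemL : MemLp (limFun X) 1 P :=
    memLp_one_iff_integrable.2 (integrable_limFun hX hint hexch)
  have hL1 : Tendsto (fun n => eLpNorm (F n - limFun X) 1 P) atTop (𝓝 0) :=
    tendsto_Lp_finite_of_tendstoInMeasure le_rfl ENNReal.one_ne_top hFmeas hmemL hUI.2.1
      (tendstoInMeasure_of_tendsto_ae hFmeas hFtend)
  have hnorm : Tendsto (fun n => ∫⁻ x, ‖F n x - limFun X x‖₊ ∂P) atTop (𝓝 0) := by
    simp only [eLpNorm_one_eq_lintegral_enorm, Pi.sub_apply] at hL1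
    exact hL1
  have hset := tendsto_setIntegral_of_L1 (limFun X) (integrable_limFun hX hint hexch).aestronglyMeasurable
    (F := F) (Eventually.of_forall fun n => integrable_condExp) hnorm s
  have hconst : ∀ n : ℕ, ∫ x in s, F n x ∂P = ∫ x in s, X 0 x ∂P := fun n =>
    setIntegral_condExp (permSigma_le hX (n + 1)) (hint 0) (exch_le X (n + 1) _ hs)
  have hconst' : Tendsto (fun n => ∫ x in s, F n x ∂P) atTop
      (𝓝 (∫ x in s, X 0 x ∂P)) := by
    simp_rw [hconst]
    exact tendsto_const_nhds
  exact tendsto_nhds_unique hset hconst'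

end SLLNExch

/-- SLLN for exchangeable sequences: sample averages converge a.s. to the conditional
expectation given the exchangeable σ-algebra. -/
theorem stmt0 {Ω : Type*} [mΩ : MeasurableSpace Ω] (P : Measure Ω) [IsProbabilityMeasure P]
    (X : ℕ → Ω → ℝ) (hX : ∀ n, Measurable (X n)) (hint : ∀ n, Integrable (X n) P)
    (hexch : Exchangeable P X) :
    ∀ᵐ ω ∂P, Filter.Tendsto (fun n : ℕ => (∑ i ∈ Finset.range n, X i ω) / n) Filter.atTop
      (𝓝 (MeasureTheory.condExp (exchangeableSigma X) P (X 0) ω)) := by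
  filter_upwards [SLLNExch.ae_tendsto_limFun hX hint hexch,
    SLLNExch.limFun_eq_condexp hX hint hexch] with ω h1 h2
  rw [← h2]
  exact h1
end

section
/- Let (X_n) be an exchangeable sequence of random elements in an arbitrary measurable space (S, 𝒮). If X_1 admits a regular conditional distribution given the exchangeable σ-algebra E_∞, then (X_n) is conditionally iid given E_∞; indeed the infinite product kernel κ^∞ of a regular conditional distribution κ of X_1 given E_∞ is a regular conditional distribution of the whole sequence (X_n) given E_∞. -/
open MeasureTheory ProbabilityTheory Filter Finset Topology

namespace DF

set_option linter.unusedSectionVars false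
set_option linter.unusedVariables false

section Cyl

variable {S : Type*} [MeasurableSpace S]

def FinPerm (π : Equiv.Perm ℕ) : Prop := ∃ N, ∀ m ≥ N, π m = m

def permMap {S : Type*} (π : Equiv.Perm ℕ) : (ℕ → S) → (ℕ → S) := fun f i => f (π i)

lemma measurable_permMap (π : Equiv.Perm ℕ) : Measurable (permMap (S := S) π) :=
  measurable_pi_lambda _ (fun _ => measurable_pi_apply _)

def restr (S : Type*) (n : ℕ) : (ℕ → S) → (Fin n → S) := fun f i => f i

lemma measurable_restr (n : ℕ) : Measurable (restr S n) :=
  measurable_pi_lambda _ (fun _ => measurable_pi_apply _)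

def cylSets (S : Type*) [MeasurableSpace S] : Set (Set (ℕ → S)) :=
  {C | ∃ (n : ℕ) (B : Set (Fin n → S)), MeasurableSet B ∧ C = restr S n ⁻¹' B}

omit [MeasurableSpace S] in
lemma cyl_mono {n m : ℕ} (h : n ≤ m) (B : Set (Fin n → S)) :
    restr S n ⁻¹' B = restr S m ⁻¹' ((fun v (i : Fin n) => v (Fin.castLE h i)) ⁻¹' B) := rfl

lemma isPiSystem_cylSets : IsPiSystem (cylSets S) := by
  rintro C₁ ⟨n, B₁, hB₁, rfl⟩ C₂ ⟨m, B₂, hB₂, rfl⟩ -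
  rcases le_total n m with h | h
  · refine ⟨m, (fun v (i : Fin n) => v (Fin.castLE h i)) ⁻¹' B₁ ∩ B₂, ?_, ?_⟩
    · exact (hB₁.preimage (measurable_pi_lambda _ (fun i => measurable_pi_apply _))).inter hB₂
    · rw [cyl_mono h B₁]; rfl
  · refine ⟨n, B₁ ∩ ((fun v (i : Fin m) => v (Fin.castLE h i)) ⁻¹' B₂), ?_, ?_⟩
    · exact hB₁.inter (hB₂.preimage (measurable_pi_lambda _ (fun i => measurable_pi_apply _)))
    · rw [cyl_mono h B₂]; rfl

lemma generateFrom_cylSets :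
    (MeasurableSpace.pi : MeasurableSpace (ℕ → S)) = MeasurableSpace.generateFrom (cylSets S) := by
  apply le_antisymm
  · refine iSup_le fun i => ?_
    rintro C ⟨B, hB, rfl⟩
    apply MeasurableSpace.measurableSet_generateFrom
    exact ⟨i + 1, (fun v : Fin (i+1) → S => v ⟨i, Nat.lt_succ_self i⟩) ⁻¹' B,
      hB.preimage (measurable_pi_apply _), rfl⟩
  · refine MeasurableSpace.generateFrom_le ?_
    rintro C ⟨n, B, hB, rfl⟩
    exact (measurable_restr n) hB

lemma perm_lt {π : Equiv.Perm ℕ} {N : ℕ} (hπ : ∀ m ≥ N, π m = m) {n : ℕ} (hn : N ≤ n)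
    {i : ℕ} (hi : i < n) : π i < n := by
  by_contra h
  push_neg at h
  have := hπ (π i) (le_trans hn h)
  have : π (π i) = π i := this
  have : (π i : ℕ) = i := π.injective this
  omega


lemma map_perm_eq_aux {Ω : Type*} {mΩ : MeasurableSpace Ω} (P : Measure Ω)
    (X : ℕ → Ω → S) (hX : ∀ n, Measurable (X n)) (hexch : Exchangeable P X)
    (π : Equiv.Perm ℕ) (N : ℕ) (hN : ∀ m ≥ N, π m = m) {n : ℕ}
    {B : Set (Fin n → S)} (hB : MeasurableSet B) (hn : N ≤ n) :
    (P.map (fun ω i => X i ω)).map (permMap π) (restr S n ⁻¹' B)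
      = P.map (fun ω i => X i ω) (restr S n ⁻¹' B) := by
  have hXm : Measurable (fun ω i => X i ω) := measurable_pi_lambda _ hX
  have hBc : MeasurableSet (restr S n ⁻¹' B) := (measurable_restr n) hB
  have hσbij : Function.Bijective (fun i : Fin n => (⟨π i, perm_lt hN hn i.2⟩ : Fin n)) := by
    rw [Fintype.bijective_iff_injective_and_card]
    refine ⟨fun i j hij => ?_, rfl⟩
    have : (π i : ℕ) = π j := congrArg Fin.val hij
    exact Fin.val_injective (π.injective this)
  set σ : Equiv.Perm (Fin n) := Equiv.ofBijective _ hσbij with hσ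
  have key : (fun ω (i : Fin n) => X (π i) ω) = (fun ω (i : Fin n) => X (σ i) ω) := rfl
  rw [Measure.map_apply (measurable_permMap π) hBc,
    Measure.map_apply hXm ((measurable_permMap π) hBc),
    Measure.map_apply hXm hBc]
  have h1 : (fun ω i => X i ω) ⁻¹' (permMap π ⁻¹' (restr S n ⁻¹' B))
      = (fun ω (i : Fin n) => X (π i) ω) ⁻¹' B := rfl
  rw [h1, key, ← Measure.map_apply (measurable_pi_lambda _ (fun i => hX _)) hB,
    ← hexch n σ, Measure.map_apply (measurable_pi_lambda _ (fun i : Fin n => hX i)) hB]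
  rfl

lemma map_perm_eq {Ω : Type*} {mΩ : MeasurableSpace Ω} (P : Measure Ω) [IsProbabilityMeasure P]
    (X : ℕ → Ω → S) (hX : ∀ n, Measurable (X n)) (hexch : Exchangeable P X)
    (π : Equiv.Perm ℕ) (hπ : ∃ N, ∀ m ≥ N, π m = m) :
    (P.map (fun ω i => X i ω)).map (permMap π) = P.map (fun ω i => X i ω) := by
  obtain ⟨N, hN⟩ := hπ
  have hXm : Measurable (fun ω i => X i ω) := measurable_pi_lambda _ hX
  have hprob : IsProbabilityMeasure (P.map (fun ω i => X i ω)) :=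
    Measure.isProbabilityMeasure_map hXm.aemeasurable
  have hprob2 : IsProbabilityMeasure ((P.map (fun ω i => X i ω)).map (permMap π)) :=
    Measure.isProbabilityMeasure_map (measurable_permMap π).aemeasurable
  refine ext_of_generate_finite (cylSets S) generateFrom_cylSets isPiSystem_cylSets ?_ (by simp)
  rintro C ⟨n, B, hB, rfl⟩
  -- enlarge n to max n N
  rcases le_total N n with hn | hn
  swap
  · rw [cyl_mono hn B]
    set B' := (fun (v : Fin N → S) (i : Fin n) => v (Fin.castLE hn i)) ⁻¹' B with hB'
    have hB'm : MeasurableSet B' :=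
      hB.preimage (measurable_pi_lambda _ (fun i => measurable_pi_apply _))
    exact map_perm_eq_aux P X hX hexch π N hN hB'm le_rfl
  · exact map_perm_eq_aux P X hX hexch π N hN hB hn


end Cyl

section Exch

variable {Ω S : Type*} [MeasurableSpace S]

def Inv (S : Type*) [MeasurableSpace S] : Set (Set (ℕ → S)) :=
  {A | MeasurableSet A ∧ ∀ π : Equiv.Perm ℕ, FinPerm π → permMap (S := S) π ⁻¹' A = A}

def exchFam (X : ℕ → Ω → S) : Set (Set Ω) :=
  {B | ∃ A ∈ Inv S, B = (fun ω i => X i ω) ⁻¹' A}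

lemma exchFam_eq_gen (X : ℕ → Ω → S) :
    {B | ∃ A : Set (ℕ → S), MeasurableSet A ∧
      (∀ π : Equiv.Perm ℕ, (∃ N, ∀ m ≥ N, π m = m) →
        (fun s : ℕ → S => fun i => s (π i)) ⁻¹' A = A) ∧
      B = (fun ω i => X i ω) ⁻¹' A} = exchFam X := by
  ext B
  constructor
  · rintro ⟨A, h1, h2, rfl⟩; exact ⟨A, ⟨h1, h2⟩, rfl⟩
  · rintro ⟨A, ⟨h1, h2⟩, rfl⟩; exact ⟨A, h1, h2, rfl⟩

lemma exchFam_isSigma (X : ℕ → Ω → S) :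
    (∅ ∈ exchFam X) ∧ (∀ B ∈ exchFam X, Bᶜ ∈ exchFam X) ∧
      (∀ f : ℕ → Set Ω, (∀ n, f n ∈ exchFam X) → (⋃ n, f n) ∈ exchFam X) := by
  refine ⟨⟨∅, ⟨MeasurableSet.empty, fun π _ => by simp⟩, by simp⟩, ?_, ?_⟩
  · rintro B ⟨A, ⟨h1, h2⟩, rfl⟩
    exact ⟨Aᶜ, ⟨h1.compl, fun π hπ => by rw [Set.preimage_compl, h2 π hπ]⟩, by simp⟩
  · intro f hf
    choose A hA hfA using hf
    refine ⟨⋃ n, A n, ⟨MeasurableSet.iUnion (fun n => (hA n).1), fun π hπ => ?_⟩, ?_⟩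
    · simp only [Set.preimage_iUnion]
      exact Set.iUnion_congr (fun n => (hA n).2 π hπ)
    · simp only [Set.preimage_iUnion]
      exact Set.iUnion_congr hfA

/-- the exchangeable sigma algebra consists exactly of the sets in `exchFam`. -/
lemma measurableSet_exchangeableSigma_iff {X : ℕ → Ω → S} {B : Set Ω} :
    MeasurableSet[exchangeableSigma X] B ↔ B ∈ exchFam X := by
  obtain ⟨he, hc, hu⟩ := exchFam_isSigma X
  constructor
  · intro hB
    induction hB with
    | basic C hC => rw [exchFam_eq_gen X] at hC; exact hC
    | empty => exact he
    | compl C _ ih => exact hc C ih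
    | iUnion f _ ih => exact hu f ih
  · intro hB
    apply MeasurableSpace.measurableSet_generateFrom
    rw [exchFam_eq_gen X]; exact hB

lemma exchangeableSigma_le {mΩ : MeasurableSpace Ω} {X : ℕ → Ω → S}
    (hX : ∀ n, Measurable (X n)) : exchangeableSigma X ≤ mΩ := by
  refine MeasurableSpace.generateFrom_le ?_
  rintro B ⟨A, h1, _, rfl⟩
  exact (measurable_pi_lambda _ hX) h1

lemma measurable_exch_comp {mS' : MeasurableSpace S} {X : ℕ → Ω → S} {T : Type*}
    [MeasurableSpace T] {h : (ℕ → S) → T} (hm : Measurable h)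
    (hinv : ∀ π : Equiv.Perm ℕ, FinPerm π → ∀ s, h (permMap π s) = h s) :
    Measurable[exchangeableSigma X] (fun ω => h (fun i => X i ω)) := by
  intro t ht
  rw [measurableSet_exchangeableSigma_iff]
  refine ⟨h ⁻¹' t, ⟨hm ht, fun π hπ => ?_⟩, rfl⟩
  ext s
  simp only [Set.mem_preimage]
  rw [hinv π hπ s]


end Exch

section Emp

variable {S : Type*} [MeasurableSpace S]

lemma mul3_abs_le {x y z : ℝ} (hx0 : 0 ≤ x) (hx1 : x ≤ 1) (hy0 : 0 ≤ y) (hy1 : y ≤ 1)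
    (hz0 : 0 ≤ z) (hz1 : z ≤ 1) : |x * y * z| ≤ 1 := by
  have h1 : 0 ≤ x * y * z := by positivity
  have h2 : x * y * z ≤ 1 := by
    calc x * y * z ≤ 1 * 1 * 1 :=
          mul_le_mul (mul_le_mul hx1 hy1 hy0 zero_le_one) hz1 hz0 (by norm_num)
      _ = 1 := by norm_num
  rw [abs_le]
  exact ⟨by linarith, h2⟩


variable {S : Type*} [MeasurableSpace S]

lemma finPerm_swap (a b : ℕ) : FinPerm (Equiv.swap a b) := by
  refine ⟨max a b + 1, fun m hm => Equiv.swap_apply_of_ne_of_ne ?_ ?_⟩ <;> omega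

lemma finPerm_mul {π τ : Equiv.Perm ℕ} (hπ : FinPerm π) (hτ : FinPerm τ) : FinPerm (π * τ) := by
  obtain ⟨N, hN⟩ := hπ; obtain ⟨M, hM⟩ := hτ
  refine ⟨max N M, fun m hm => ?_⟩
  have h1 : τ m = m := hM m (le_trans (le_max_right _ _) hm)
  have : (π * τ) m = π (τ m) := rfl
  rw [this, h1, hN m (le_trans (le_max_left _ _) hm)]

lemma exists_finperm_pair (i j : ℕ) (hij : i ≠ j) :
    ∃ π : Equiv.Perm ℕ, FinPerm π ∧ π 0 = i ∧ π 1 = j := by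
  set σ := Equiv.swap 0 i with hσ
  set j' := σ.symm j with hj'
  have hj'0 : j' ≠ 0 := by
    intro h
    apply hij.symm
    have : j = σ 0 := by rw [← h, Equiv.apply_symm_apply]
    rw [this, hσ, Equiv.swap_apply_left]
  refine ⟨σ * Equiv.swap 1 j', finPerm_mul (finPerm_swap 0 i) (finPerm_swap 1 j'), ?_, ?_⟩
  · have h0 : Equiv.swap 1 j' 0 = 0 := Equiv.swap_apply_of_ne_of_ne (by omega) (Ne.symm hj'0)
    show σ (Equiv.swap 1 j' 0) = i
    rw [h0, hσ, Equiv.swap_apply_left]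
  · show σ (Equiv.swap 1 j' 1) = j
    rw [Equiv.swap_apply_left, hj', Equiv.apply_symm_apply]

/-! ### empirical averages -/

noncomputable def Yf (A : Set S) (i : ℕ) : (ℕ → S) → ℝ :=
  fun s => A.indicator (fun _ => (1 : ℝ)) (s i)

noncomputable def gf (A : Set S) (n : ℕ) : (ℕ → S) → ℝ :=
  fun s => (∑ i ∈ Finset.range n, Yf A i s) / n

noncomputable def alphaf (A : Set S) : (ℕ → S) → ℝ :=
  fun s => limsup (fun k => gf A (4 ^ k) s) atTop

lemma Yf_nonneg (A : Set S) (i : ℕ) (s : ℕ → S) : 0 ≤ Yf A i s :=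
  Set.indicator_nonneg (fun _ _ => zero_le_one) _

lemma Yf_le_one (A : Set S) (i : ℕ) (s : ℕ → S) : Yf A i s ≤ 1 :=
  Set.indicator_le_self' (fun _ _ => zero_le_one) _

lemma Yf_mul_self (A : Set S) (i : ℕ) (s : ℕ → S) : Yf A i s * Yf A i s = Yf A i s := by
  unfold Yf
  by_cases h : s i ∈ A <;> simp [Set.indicator_apply, h]

lemma measurable_Yf {A : Set S} (hA : MeasurableSet A) (i : ℕ) : Measurable (Yf A i) :=
  ((measurable_const.indicator hA).comp (measurable_pi_apply i))

lemma measurable_gf {A : Set S} (hA : MeasurableSet A) (n : ℕ) : Measurable (gf A n) :=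
  (Finset.measurable_sum _ (fun i _ => measurable_Yf hA i)).div_const _

lemma measurable_alphaf {A : Set S} (hA : MeasurableSet A) : Measurable (alphaf A) :=
  Measurable.limsup (fun k => measurable_gf hA (4 ^ k))

lemma gf_nonneg (A : Set S) (n : ℕ) (s : ℕ → S) : 0 ≤ gf A n s := by
  unfold gf
  apply div_nonneg (Finset.sum_nonneg (fun i _ => Yf_nonneg A i s)) (by positivity)

lemma gf_le_one (A : Set S) (n : ℕ) (s : ℕ → S) : gf A n s ≤ 1 := by
  unfold gf
  rcases Nat.eq_zero_or_pos n with h | h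
  · simp [h]
  · rw [div_le_one (by exact_mod_cast h)]
    calc ∑ i ∈ Finset.range n, Yf A i s ≤ ∑ i ∈ Finset.range n, 1 :=
          Finset.sum_le_sum (fun i _ => Yf_le_one A i s)
      _ = n := by simp

lemma alphaf_nonneg (A : Set S) (s : ℕ → S) : 0 ≤ alphaf A s := by
  refine le_limsup_of_le (isBoundedUnder_of ⟨1, fun k => gf_le_one A (4 ^ k) s⟩) ?_
  intro b hb
  obtain ⟨k, hk⟩ := hb.exists
  exact le_trans (gf_nonneg A _ s) hk

lemma alphaf_le_one (A : Set S) (s : ℕ → S) : alphaf A s ≤ 1 :=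
  limsup_le_of_le (isCoboundedUnder_le_of_le atTop (fun k => gf_nonneg A _ s))
    (Eventually.of_forall (fun k => gf_le_one A _ s))

lemma gf_perm {A : Set S} {π : Equiv.Perm ℕ} {N : ℕ} (hN : ∀ m ≥ N, π m = m) {n : ℕ}
    (hn : N ≤ n) (s : ℕ → S) : gf A n (permMap π s) = gf A n s := by
  unfold gf
  congr 1
  have h1 : (∑ i ∈ Finset.range n, Yf A i (permMap π s))
      = ∑ i ∈ Finset.range n, Yf A (π i) s := rfl
  rw [h1]
  refine Equiv.Perm.sum_comp π (Finset.range n) (fun i => Yf A i s) ?_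
  intro x hx
  simp only [Finset.coe_range, Set.mem_Iio]
  by_contra h
  push_neg at h
  exact hx (hN x (le_trans hn h))

lemma alphaf_perm {A : Set S} {π : Equiv.Perm ℕ} (hπ : FinPerm π) (s : ℕ → S) :
    alphaf A (permMap π s) = alphaf A s := by
  obtain ⟨N, hN⟩ := hπ
  unfold alphaf
  apply limsup_congr
  filter_upwards [eventually_ge_atTop N] with k hk
  exact gf_perm hN (le_trans hk (le_of_lt (Nat.lt_pow_self (n := k) (by norm_num : 1 < 4)))) s


/-! ### integrals w.r.t. an invariant measure -/

section Integrals

variable (ν : Measure (ℕ → S)) [IsProbabilityMeasure ν]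

lemma integrable_of_bounded {f : (ℕ → S) → ℝ} (hf : Measurable f) (C : ℝ)
    (hb : ∀ s, |f s| ≤ C) : Integrable f ν :=
  (integrable_const C).mono' hf.aestronglyMeasurable
    (Eventually.of_forall (fun s => by rw [Real.norm_eq_abs]; exact hb s))

variable {A : Set S} (hA : MeasurableSet A)
include hA

lemma integrable_Yf (i : ℕ) : Integrable (Yf A i) ν :=
  integrable_of_bounded ν (measurable_Yf hA i) 1
    (fun s => abs_le.2 ⟨by linarith [Yf_nonneg A i s], Yf_le_one A i s⟩)

lemma integrable_YY (i j : ℕ) : Integrable (fun s => Yf A i s * Yf A j s) ν :=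
  integrable_of_bounded ν ((measurable_Yf hA i).mul (measurable_Yf hA j)) 1
    (fun s => abs_le.2 ⟨by nlinarith [Yf_nonneg A i s, Yf_nonneg A j s],
      by nlinarith [Yf_nonneg A i s, Yf_nonneg A j s, Yf_le_one A i s, Yf_le_one A j s]⟩)

omit hA
variable (hν : ∀ π : Equiv.Perm ℕ, FinPerm π → ν.map (permMap π) = ν)
include hν

lemma integral_perm_eq {π : Equiv.Perm ℕ} (hπ : FinPerm π) {f : (ℕ → S) → ℝ}
    (hf : Measurable f) :
    ∫ s, f (permMap π s) ∂ν = ∫ s, f s ∂ν := by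
  have h2 : AEStronglyMeasurable f (ν.map (permMap π)) := by
    rw [hν π hπ]; exact hf.aestronglyMeasurable
  have h1 := integral_map (μ := ν) (φ := permMap π) (measurable_permMap π).aemeasurable h2
  rw [← h1, hν π hπ]

include hA

lemma integral_Yf_eq (i : ℕ) : ∫ s, Yf A i s ∂ν = ∫ s, Yf A 0 s ∂ν := by
  rcases eq_or_ne i 0 with rfl | hi
  · rfl
  · have key : ∀ s, Yf A 0 (permMap (Equiv.swap 0 i) s) = Yf A i s := by
      intro s
      show A.indicator _ (s (Equiv.swap 0 i 0)) = A.indicator _ (s i)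
      rw [Equiv.swap_apply_left]
    calc ∫ s, Yf A i s ∂ν = ∫ s, Yf A 0 (permMap (Equiv.swap 0 i) s) ∂ν := by
          simp_rw [key]
      _ = ∫ s, Yf A 0 s ∂ν := integral_perm_eq ν hν (finPerm_swap 0 i) (measurable_Yf hA 0)

lemma integral_YY_eq {i j : ℕ} (hij : i ≠ j) :
    ∫ s, Yf A i s * Yf A j s ∂ν = ∫ s, Yf A 0 s * Yf A 1 s ∂ν := by
  obtain ⟨π, hπ, h0, h1⟩ := exists_finperm_pair i j hij
  have key : ∀ s, Yf A 0 (permMap π s) * Yf A 1 (permMap π s) = Yf A i s * Yf A j s := by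
    intro s
    show A.indicator _ (s (π 0)) * A.indicator _ (s (π 1)) = _
    rw [h0, h1]; rfl
  calc ∫ s, Yf A i s * Yf A j s ∂ν
      = ∫ s, Yf A 0 (permMap π s) * Yf A 1 (permMap π s) ∂ν := by simp_rw [key]
    _ = ∫ s, Yf A 0 s * Yf A 1 s ∂ν :=
        integral_perm_eq ν hν hπ ((measurable_Yf hA 0).mul (measurable_Yf hA 1))

lemma integral_YY_formula (i j : ℕ) :
    ∫ s, Yf A i s * Yf A j s ∂ν
      = if i = j then ∫ s, Yf A 0 s ∂ν else ∫ s, Yf A 0 s * Yf A 1 s ∂ν := by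
  rcases eq_or_ne i j with rfl | hij
  · simp only [if_pos rfl]
    simp_rw [Yf_mul_self A i]
    exact integral_Yf_eq ν hA hν i
  · rw [if_neg hij]
    exact integral_YY_eq ν hA hν hij

/-- product moments of empirical averages -/
lemma integral_gf_mul (n m : ℕ) (hn : 1 ≤ n) (hnm : n ≤ m) :
    ∫ s, gf A n s * gf A m s ∂ν
      = (∫ s, Yf A 0 s * Yf A 1 s ∂ν)
        + ((∫ s, Yf A 0 s ∂ν) - ∫ s, Yf A 0 s * Yf A 1 s ∂ν) / m := by
  set a := ∫ s, Yf A 0 s * Yf A 1 s ∂ν with ha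
  set b := ∫ s, Yf A 0 s ∂ν with hb
  have key : ∀ s, gf A n s * gf A m s
      = (∑ i ∈ Finset.range n, ∑ j ∈ Finset.range m, Yf A i s * Yf A j s) / (n * m) := by
    intro s
    unfold gf
    rw [div_mul_div_comm, Finset.sum_mul_sum]
  simp_rw [key]
  rw [integral_div]
  rw [integral_finset_sum _ (fun i _ => integrable_finset_sum _
    (fun j (_ : j ∈ Finset.range m) => integrable_YY ν hA i j))]
  · have step : ∀ i ∈ Finset.range n,
        (∫ s, ∑ j ∈ Finset.range m, Yf A i s * Yf A j s ∂ν) = m * a + (b - a) := by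
      intro i hi
      rw [integral_finset_sum _ (fun j _ => integrable_YY ν hA i j)]
      have : ∀ j ∈ Finset.range m, (∫ s, Yf A i s * Yf A j s ∂ν)
          = a + if j = i then b - a else 0 := by
        intro j _
        rw [integral_YY_formula ν hA hν i j]
        rcases eq_or_ne i j with rfl | hij
        · simp [hb]
        · rw [if_neg hij, if_neg (Ne.symm hij)]; ring
      rw [Finset.sum_congr rfl this, Finset.sum_add_distrib, Finset.sum_const,
        Finset.card_range, Finset.sum_ite_eq' (Finset.range m) i (fun _ => b - a),
        if_pos (Finset.mem_range.2 (lt_of_lt_of_le (Finset.mem_range.1 hi) hnm))]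
      push_cast
      ring
    rw [Finset.sum_congr rfl step, Finset.sum_const, Finset.card_range]
    have hn' : (0:ℝ) < n := by exact_mod_cast hn
    have hm' : (0:ℝ) < m := by exact_mod_cast lt_of_lt_of_le hn hnm
    field_simp
    ring

/-- second moment bound -/
lemma integral_sq_diff_le (n m : ℕ) (hn : 1 ≤ n) (hnm : n ≤ m) :
    ∫ s, (gf A n s - gf A m s) ^ 2 ∂ν ≤ 1 / n := by
  set a := ∫ s, Yf A 0 s * Yf A 1 s ∂ν with ha
  set b := ∫ s, Yf A 0 s ∂ν with hb
  have hM : ∀ p q : ℕ, 1 ≤ p → p ≤ q → ∫ s, gf A p s * gf A q s ∂ν = a + (b - a) / q :=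
    fun p q h1 h2 => integral_gf_mul ν hA hν p q h1 h2
  have hcomm : ∀ s, gf A m s * gf A n s = gf A n s * gf A m s := fun s => mul_comm _ _
  have int_pq : ∀ p q : ℕ, Integrable (fun s => gf A p s * gf A q s) ν := by
    intro p q
    refine integrable_of_bounded ν ((measurable_gf hA p).mul (measurable_gf hA q)) 1 (fun s => ?_)
    have := gf_nonneg A p s; have := gf_nonneg A q s
    have := gf_le_one A p s; have := gf_le_one A q s
    rw [abs_le]; constructor <;> nlinarith
  have expand : ∀ s, (gf A n s - gf A m s) ^ 2
      = gf A n s * gf A n s - 2 * (gf A n s * gf A m s) + gf A m s * gf A m s := by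
    intro s; ring
  simp_rw [expand]
  have hc2 : Integrable (fun s => 2 * (gf A n s * gf A m s)) ν := (int_pq n m).const_mul 2
  have i1 : Integrable (fun s => gf A n s * gf A n s - 2 * (gf A n s * gf A m s)) ν := by
    exact (int_pq n n).sub hc2
  rw [integral_add i1 (int_pq m m), integral_sub (int_pq n n) hc2, integral_const_mul,
    hM n n hn le_rfl, hM n m hn hnm, hM m m (le_trans hn hnm) le_rfl]
  have hab : a ≤ b := by
    rw [ha, hb]
    refine integral_mono (integrable_YY ν hA 0 1) (integrable_Yf ν hA 0) (fun s => ?_)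
    have h1 := Yf_le_one A 1 s
    have h0 := Yf_nonneg A 0 s
    nlinarith
  have hb1 : b ≤ 1 := by
    rw [hb]
    calc ∫ s, Yf A 0 s ∂ν ≤ ∫ _, (1:ℝ) ∂ν :=
          integral_mono (integrable_Yf ν hA 0) (integrable_const 1) (fun s => Yf_le_one A 0 s)
      _ = 1 := by simp
  have hn' : (0:ℝ) < n := by exact_mod_cast hn
  have hm' : (0:ℝ) < m := by exact_mod_cast lt_of_lt_of_le hn hnm
  have hinv : 1 / (m:ℝ) ≤ 1 / n := by
    apply one_div_le_one_div_of_le hn'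
    exact_mod_cast hnm
  have hba : 0 ≤ b - a := by linarith
  have ha0 : 0 ≤ a := by
    rw [ha]
    exact integral_nonneg (fun s => mul_nonneg (Yf_nonneg A 0 s) (Yf_nonneg A 1 s))
  have e1 : a + (b-a)/n - 2*(a + (b-a)/m) + (a + (b-a)/m) = (b-a) * (1/n - 1/m) := by ring
  rw [e1]
  calc (b-a) * (1/(n:ℝ) - 1/m) ≤ 1 * (1/n - 1/m) := by
        apply mul_le_mul_of_nonneg_right (by linarith) (by linarith)
    _ ≤ 1/n := by
        have : (0:ℝ) ≤ 1/m := by positivity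
        linarith


omit hν in
lemma integrable_gf_diff (n m : ℕ) :
    Integrable (fun s => |gf A n s - gf A m s|) ν := by
  refine integrable_of_bounded ν ((measurable_gf hA n).sub (measurable_gf hA m)).abs 1
    (fun s => ?_)
  rw [abs_abs, abs_le]
  have := gf_nonneg A n s; have := gf_le_one A n s
  have := gf_nonneg A m s; have := gf_le_one A m s
  constructor <;> linarith

lemma integral_abs_diff_le (k : ℕ) :
    ∫ s, |gf A (4 ^ (k+1)) s - gf A (4 ^ k) s| ∂ν ≤ (1/2) ^ k := by
  set t : ℝ := 2 ^ k with ht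
  have ht0 : (0:ℝ) < t := by positivity
  set D : (ℕ → S) → ℝ := fun s => gf A (4 ^ k) s - gf A (4 ^ (k+1)) s with hD
  have habs : ∀ s, |gf A (4 ^ (k+1)) s - gf A (4 ^ k) s| = |D s| := fun s => abs_sub_comm _ _
  have hpt : ∀ s, |D s| ≤ (D s ^ 2 * t + 1/t) / 2 := by
    intro s
    have h2 : 2 * (|D s| * t) ≤ D s ^ 2 * (t * t) + 1 := by
      nlinarith [sq_nonneg (|D s| * t - 1), sq_abs (D s)]
    rw [le_div_iff₀ (by norm_num : (0:ℝ) < 2), ← sub_nonneg]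
    have expand : D s ^ 2 * t + 1/t - |D s| * 2
        = (D s ^ 2 * (t * t) + 1 - 2 * (|D s| * t)) / t := by
      field_simp
    rw [expand]
    apply div_nonneg (by linarith) (le_of_lt ht0)
  have hDb : ∀ s, |D s| ≤ 1 := by
    intro s
    rw [hD, abs_le]
    have := gf_nonneg A (4 ^ k) s; have := gf_le_one A (4 ^ k) s
    have := gf_nonneg A (4 ^ (k+1)) s; have := gf_le_one A (4 ^ (k+1)) s
    constructor <;> simp <;> linarith
  have hDsq : Integrable (fun s => D s ^ 2) ν := by
    refine integrable_of_bounded ν (((measurable_gf hA _).sub (measurable_gf hA _)).pow_const 2) 1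
      (fun s => ?_)
    rw [abs_pow]
    calc |D s| ^ 2 ≤ 1 ^ 2 := pow_le_pow_left₀ (abs_nonneg _) (hDb s) 2
      _ = 1 := one_pow 2
  have hmono : ∫ s, |D s| ∂ν ≤ ∫ s, (D s ^ 2 * t + 1/t) / 2 ∂ν := by
    refine integral_mono ?_ ?_ hpt
    · have := integrable_gf_diff ν hA (4 ^ k) (4 ^ (k+1))
      simpa [hD] using this
    · exact (((hDsq.mul_const t).add (integrable_const _)).div_const 2)
  have hsq : ∫ s, D s ^ 2 ∂ν ≤ 1 / (4 ^ k : ℕ) := by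
    have := integral_sq_diff_le ν hA hν (4 ^ k) (4 ^ (k+1)) (Nat.one_le_pow _ _ (by norm_num))
      (Nat.pow_le_pow_right (by norm_num) (Nat.le_succ k))
    simpa [hD] using this
  have hval : ∫ s, (D s ^ 2 * t + 1/t) / 2 ∂ν
      = ((∫ s, D s ^ 2 ∂ν) * t + 1/t) / 2 := by
    rw [integral_div, integral_add (hDsq.mul_const t) (integrable_const _),
      integral_mul_const, integral_const]
    simp
  have hcast : ((4 ^ k : ℕ) : ℝ) = t * t := by
    push_cast
    rw [ht, ← mul_pow]
    norm_num
  have final : ((∫ s, D s ^ 2 ∂ν) * t + 1/t) / 2 ≤ (1/2) ^ k := by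
    have h1 : (∫ s, D s ^ 2 ∂ν) * t ≤ 1/t := by
      calc (∫ s, D s ^ 2 ∂ν) * t ≤ (1 / ((4 ^ k : ℕ) : ℝ)) * t :=
            mul_le_mul_of_nonneg_right hsq (le_of_lt ht0)
        _ = 1/t := by rw [hcast]; field_simp
    have h2 : (1:ℝ)/t = (1/2) ^ k := by
      rw [ht, one_div, ← inv_pow, inv_eq_one_div]
    linarith
  calc ∫ s, |gf A (4 ^ (k+1)) s - gf A (4 ^ k) s| ∂ν = ∫ s, |D s| ∂ν := by simp_rw [habs]
    _ ≤ _ := hmono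
    _ = _ := hval
    _ ≤ _ := final

/-- main a.e. convergence of empirical averages to `alphaf` -/
lemma tendsto_gf_ae :
    ∀ᵐ s ∂ν, Tendsto (fun k => gf A (4 ^ k) s) atTop (𝓝 (alphaf A s)) := by
  set D : ℕ → (ℕ → S) → ℝ := fun k s => gf A (4 ^ (k+1)) s - gf A (4 ^ k) s with hD
  have hDmeas : ∀ k, Measurable (D k) := fun k =>
    (measurable_gf hA _).sub (measurable_gf hA _)
  have hlin : ∫⁻ s, ∑' k, ENNReal.ofReal |D k s| ∂ν < ⊤ := by
    rw [lintegral_tsum (fun k => ((hDmeas k).abs.ennreal_ofReal).aemeasurable)]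
    have hle : ∀ k, ∫⁻ s, ENNReal.ofReal |D k s| ∂ν ≤ ENNReal.ofReal ((1/2) ^ k) := by
      intro k
      rw [← ofReal_integral_eq_lintegral_ofReal
        (integrable_gf_diff ν hA (4 ^ (k+1)) (4 ^ k))
        (Eventually.of_forall (fun s => abs_nonneg _))]
      exact ENNReal.ofReal_le_ofReal (integral_abs_diff_le ν hA hν k)
    calc ∑' k, ∫⁻ s, ENNReal.ofReal |D k s| ∂ν
        ≤ ∑' k, ENNReal.ofReal ((1/2) ^ k) := ENNReal.tsum_le_tsum hle
      _ = ENNReal.ofReal (∑' k, (1/2) ^ k) := by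
          rw [ENNReal.ofReal_tsum_of_nonneg (fun k => by positivity)
            (summable_geometric_of_lt_one (by norm_num) (by norm_num))]
      _ < ⊤ := ENNReal.ofReal_lt_top
  have hae : ∀ᵐ s ∂ν, (∑' k, ENNReal.ofReal |D k s|) < ⊤ :=
    ae_lt_top (Measurable.ennreal_tsum (fun k => (hDmeas k).abs.ennreal_ofReal)) hlin.ne
  filter_upwards [hae] with s hs
  have hsuma : Summable (fun k => |D k s|) := by
    have h1 := ENNReal.summable_toReal hs.ne
    have h2 : ∀ k, (ENNReal.ofReal |D k s|).toReal = |D k s| :=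
      fun k => ENNReal.toReal_ofReal (abs_nonneg _)
    simpa [h2] using h1
  have hsum : Summable (fun k => D k s) := hsuma.of_abs
  have htel : ∀ k, gf A (4 ^ k) s = gf A (4 ^ 0) s + ∑ j ∈ Finset.range k, D j s := by
    intro k
    rw [Finset.sum_range_sub (fun j => gf A (4 ^ j) s)]
    ring
  have htend : Tendsto (fun k => gf A (4 ^ k) s) atTop
      (𝓝 (gf A (4 ^ 0) s + ∑' j, D j s)) := by
    have h1 : Tendsto (fun k => ∑ j ∈ Finset.range k, D j s) atTop (𝓝 (∑' j, D j s)) :=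
      hsum.hasSum.tendsto_sum_nat
    have h2 := (tendsto_const_nhds (x := gf A (4 ^ 0) s)).add h1
    refine h2.congr (fun k => ?_)
    rw [← htel k]
  have hls : alphaf A s = gf A (4 ^ 0) s + ∑' j, D j s := htend.limsup_eq
  rw [hls]
  exact htend

/-! ### window averages -/

noncomputable def wf (A : Set S) (k : ℕ) : (ℕ → S) → ℝ :=
  fun s => (∑ j ∈ Finset.Ico (4 ^ k) (4 ^ (k+1)), Yf A j s) / (3 * 4 ^ k)

omit hν

lemma measurable_wf (k : ℕ) : Measurable (wf A k) :=
  (Finset.measurable_sum _ (fun i _ => measurable_Yf hA i)).div_const _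

omit hA

lemma wf_nonneg (A : Set S) (k : ℕ) (s : ℕ → S) : 0 ≤ wf A k s := by
  unfold wf
  apply div_nonneg (Finset.sum_nonneg (fun i _ => Yf_nonneg A i s)) (by positivity)

lemma wf_le_one (A : Set S) (k : ℕ) (s : ℕ → S) : wf A k s ≤ 1 := by
  unfold wf
  rw [div_le_one (by positivity)]
  calc ∑ j ∈ Finset.Ico (4 ^ k) (4 ^ (k+1)), Yf A j s
      ≤ ∑ j ∈ Finset.Ico (4 ^ k) (4 ^ (k+1)), 1 :=
        Finset.sum_le_sum (fun i _ => Yf_le_one A i s)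
    _ = ((4 ^ (k+1) - 4 ^ k : ℕ) : ℝ) := by rw [Finset.sum_const, Nat.card_Ico]; simp
    _ ≤ 3 * 4 ^ k := by
        have : (4:ℕ) ^ (k+1) - 4 ^ k = 3 * 4 ^ k := by
          rw [pow_succ]
          omega
        rw [this]
        push_cast
        norm_num

lemma wf_eq (A : Set S) (k : ℕ) (s : ℕ → S) :
    wf A k s = (4 * gf A (4 ^ (k+1)) s - gf A (4 ^ k) s) / 3 := by
  unfold wf gf
  have hsub : ∑ j ∈ Finset.Ico (4 ^ k) (4 ^ (k+1)), Yf A j s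
      = (∑ j ∈ Finset.range (4 ^ (k+1)), Yf A j s) - ∑ j ∈ Finset.range (4 ^ k), Yf A j s := by
    rw [Finset.sum_Ico_eq_sub _ (Nat.pow_le_pow_right (by norm_num) (Nat.le_succ k))]
  rw [hsub]
  have h1 : ((4:ℝ) ^ k) ≠ 0 := by positivity
  have h2 : ((4 ^ k : ℕ) : ℝ) = 4 ^ k := by push_cast; ring
  have h3 : ((4 ^ (k+1) : ℕ) : ℝ) = 4 * 4 ^ k := by push_cast; ring
  rw [h2, h3]
  field_simp

lemma tendsto_wf_ae (hA : MeasurableSet A)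
    (hν : ∀ π : Equiv.Perm ℕ, FinPerm π → ν.map (permMap π) = ν) :
    ∀ᵐ s ∂ν, Tendsto (fun k => wf A k s) atTop (𝓝 (alphaf A s)) := by
  filter_upwards [tendsto_gf_ae ν hA hν] with s hs
  have h1 : Tendsto (fun k => gf A (4 ^ (k+1)) s) atTop (𝓝 (alphaf A s)) :=
    hs.comp (tendsto_add_atTop_nat 1)
  have h2 : Tendsto (fun k => (4 * gf A (4 ^ (k+1)) s - gf A (4 ^ k) s) / 3) atTop
      (𝓝 ((4 * alphaf A s - alphaf A s) / 3)) :=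
    ((h1.const_mul 4).sub hs).div_const 3
  have h3 : (4 * alphaf A s - alphaf A s) / 3 = alphaf A s := by ring
  rw [h3] at h2
  refine h2.congr (fun k => ?_)
  rw [wf_eq]

end Integrals

/-! ### main induction -/

section Main

variable (ν : Measure (ℕ → S)) [IsProbabilityMeasure ν]
variable (hν : ∀ π : Equiv.Perm ℕ, FinPerm π → ν.map (permMap π) = ν)
include hν

lemma replacement (A : ℕ → Set S) (hA : ∀ i, MeasurableSet (A i)) {B : Set S}
    (hB : MeasurableSet B) {W : (ℕ → S) → ℝ} (hWm : Measurable W)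
    (hWinv : ∀ π : Equiv.Perm ℕ, FinPerm π → ∀ s, W (permMap π s) = W s)
    {m j : ℕ} (hmj : m ≤ j) :
    ∫ s, (∏ i ∈ Finset.range m, Yf (A i) i s) * Yf B j s * W s ∂ν
      = ∫ s, (∏ i ∈ Finset.range m, Yf (A i) i s) * Yf B m s * W s ∂ν := by
  rcases eq_or_lt_of_le hmj with rfl | hlt
  · rfl
  set π := Equiv.swap m j with hπ
  have hf : Measurable (fun s => (∏ i ∈ Finset.range m, Yf (A i) i s) * Yf B m s * W s) :=
    ((Finset.measurable_prod _ (fun i _ => measurable_Yf (hA i) i)).mul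
      (measurable_Yf hB m)).mul hWm
  have hperm := integral_perm_eq ν hν (finPerm_swap m j) hf
  rw [← hperm]
  congr 1
  funext s
  have h1 : ∀ i ∈ Finset.range m, Yf (A i) i (permMap π s) = Yf (A i) i s := by
    intro i hi
    have hi' : i < m := Finset.mem_range.1 hi
    show (A i).indicator _ (s (π i)) = (A i).indicator _ (s i)
    rw [hπ, Equiv.swap_apply_of_ne_of_ne (by omega) (by omega)]
  have h2 : Yf B m (permMap π s) = Yf B j s := by
    show B.indicator _ (s (π m)) = B.indicator _ (s j)
    rw [hπ, Equiv.swap_apply_left]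
  rw [Finset.prod_congr rfl h1, h2, hWinv π (finPerm_swap m j) s]

lemma main_induction (A : ℕ → Set S) (hA : ∀ i, MeasurableSet (A i)) :
    ∀ (m : ℕ) (W : (ℕ → S) → ℝ), Measurable W → (∀ s, 0 ≤ W s) → (∀ s, W s ≤ 1) →
    (∀ π : Equiv.Perm ℕ, FinPerm π → ∀ s, W (permMap π s) = W s) →
    ∫ s, (∏ i ∈ Finset.range m, Yf (A i) i s) * W s ∂ν
      = ∫ s, (∏ i ∈ Finset.range m, alphaf (A i) s) * W s ∂ν := by
  intro m
  induction m with
  | zero => intro W _ _ _ _; simp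
  | succ m ih =>
    intro W hWm hW0 hW1 hWinv
    -- measurability and bounds for products
    have hPm : Measurable (fun s => ∏ i ∈ Finset.range m, Yf (A i) i s) :=
      Finset.measurable_prod _ (fun i _ => measurable_Yf (hA i) i)
    have hP0 : ∀ s, 0 ≤ ∏ i ∈ Finset.range m, Yf (A i) i s :=
      fun s => Finset.prod_nonneg (fun i _ => Yf_nonneg _ i s)
    have hP1 : ∀ s, (∏ i ∈ Finset.range m, Yf (A i) i s) ≤ 1 :=
      fun s => Finset.prod_le_one (fun i _ => Yf_nonneg _ i s) (fun i _ => Yf_le_one _ i s)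
    -- step 1: rewrite with prod_range_succ
    have step1 : ∫ s, (∏ i ∈ Finset.range (m+1), Yf (A i) i s) * W s ∂ν
        = ∫ s, (∏ i ∈ Finset.range m, Yf (A i) i s) * Yf (A m) m s * W s ∂ν := by
      congr 1; funext s; rw [Finset.prod_range_succ]
    -- step 2: for large k, replace by window average
    have step2 : ∀ k, m ≤ 4 ^ k →
        ∫ s, (∏ i ∈ Finset.range m, Yf (A i) i s) * Yf (A m) m s * W s ∂ν
          = ∫ s, (∏ i ∈ Finset.range m, Yf (A i) i s) * wf (A m) k s * W s ∂ν := by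
      intro k hk
      have hc : ((3:ℝ) * 4 ^ k) ≠ 0 := by positivity
      have hint : ∀ j : ℕ, Integrable
          (fun s => (∏ i ∈ Finset.range m, Yf (A i) i s) * Yf (A m) j s * W s) ν := by
        intro j
        refine integrable_of_bounded ν ((hPm.mul (measurable_Yf (hA m) j)).mul hWm) 1
          (fun s => ?_)
        exact mul3_abs_le (hP0 s) (hP1 s) (Yf_nonneg (A m) j s) (Yf_le_one (A m) j s)
          (hW0 s) (hW1 s)
      have expand : ∀ s, (∏ i ∈ Finset.range m, Yf (A i) i s) * wf (A m) k s * W s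
          = (∑ j ∈ Finset.Ico (4 ^ k) (4 ^ (k+1)),
              (∏ i ∈ Finset.range m, Yf (A i) i s) * Yf (A m) j s * W s) / (3 * 4 ^ k) := by
        intro s
        have hsum : ∑ j ∈ Finset.Ico (4 ^ k) (4 ^ (k+1)),
            (∏ i ∈ Finset.range m, Yf (A i) i s) * Yf (A m) j s * W s
            = (∏ i ∈ Finset.range m, Yf (A i) i s)
              * (∑ j ∈ Finset.Ico (4 ^ k) (4 ^ (k+1)), Yf (A m) j s) * W s := by
          rw [Finset.mul_sum, Finset.sum_mul]
        rw [hsum]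
        unfold wf
        field_simp
      simp_rw [expand]
      rw [integral_div, integral_finset_sum _ (fun j _ => hint j)]
      have hrepl : ∀ j ∈ Finset.Ico (4 ^ k) (4 ^ (k+1)),
          ∫ s, (∏ i ∈ Finset.range m, Yf (A i) i s) * Yf (A m) j s * W s ∂ν
            = ∫ s, (∏ i ∈ Finset.range m, Yf (A i) i s) * Yf (A m) m s * W s ∂ν := by
        intro j hj
        have hmj : m ≤ j := le_trans hk (Finset.mem_Ico.1 hj).1
        exact replacement ν hν A hA (hA m) hWm hWinv hmj
      rw [Finset.sum_congr rfl hrepl, Finset.sum_const, Nat.card_Ico]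
      have hcard : ((4 ^ (k+1) - 4 ^ k : ℕ) : ℝ) = 3 * 4 ^ k := by
        have : (4:ℕ) ^ (k+1) - 4 ^ k = 3 * 4 ^ k := by rw [pow_succ]; omega
        rw [this]; push_cast; ring
      rw [nsmul_eq_mul, hcard]
      field_simp
    -- step 3: limit of window averages
    have step3 : ∫ s, (∏ i ∈ Finset.range m, Yf (A i) i s) * Yf (A m) m s * W s ∂ν
        = ∫ s, (∏ i ∈ Finset.range m, Yf (A i) i s) * alphaf (A m) s * W s ∂ν := by
      have htendint : Tendsto
          (fun k => ∫ s, (∏ i ∈ Finset.range m, Yf (A i) i s) * wf (A m) k s * W s ∂ν)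
          atTop (𝓝 (∫ s, (∏ i ∈ Finset.range m, Yf (A i) i s) * alphaf (A m) s * W s ∂ν)) := by
        refine tendsto_integral_of_dominated_convergence (fun _ => (1:ℝ))
          (fun k => ((hPm.mul (measurable_wf (hA m) k)).mul hWm).aestronglyMeasurable)
          (integrable_const 1) (fun k => Eventually.of_forall (fun s => ?_)) ?_
        · rw [Real.norm_eq_abs]
          exact mul3_abs_le (hP0 s) (hP1 s) (wf_nonneg (A m) k s) (wf_le_one (A m) k s)
            (hW0 s) (hW1 s)
        · filter_upwards [tendsto_wf_ae ν (hA m) hν] with s hs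
          exact ((tendsto_const_nhds.mul hs).mul tendsto_const_nhds)
      have heventually : ∀ᶠ k in atTop,
          (∫ s, (∏ i ∈ Finset.range m, Yf (A i) i s) * wf (A m) k s * W s ∂ν)
            = ∫ s, (∏ i ∈ Finset.range m, Yf (A i) i s) * Yf (A m) m s * W s ∂ν := by
        filter_upwards [eventually_ge_atTop m] with k hk
        exact (step2 k (le_trans hk (le_of_lt (Nat.lt_pow_self (n := k) (by norm_num : 1 < 4))))).symm
      exact tendsto_nhds_unique tendsto_const_nhds (htendint.congr' heventually)
    -- step 4: apply IH with W' = alphaf (A m) * W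
    have hW'm : Measurable (fun s => alphaf (A m) s * W s) :=
      (measurable_alphaf (hA m)).mul hWm
    have hW'0 : ∀ s, 0 ≤ alphaf (A m) s * W s :=
      fun s => mul_nonneg (alphaf_nonneg _ s) (hW0 s)
    have hW'1 : ∀ s, alphaf (A m) s * W s ≤ 1 := by
      intro s
      calc alphaf (A m) s * W s ≤ 1 * 1 :=
            mul_le_mul (alphaf_le_one _ s) (hW1 s) (hW0 s) zero_le_one
        _ = 1 := by norm_num
    have hW'inv : ∀ π : Equiv.Perm ℕ, FinPerm π → ∀ s,
        alphaf (A m) (permMap π s) * W (permMap π s) = alphaf (A m) s * W s := by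
      intro π hπ s
      rw [alphaf_perm hπ s, hWinv π hπ s]
    have ihW := ih (fun s => alphaf (A m) s * W s) hW'm hW'0 hW'1 hW'inv
    calc ∫ s, (∏ i ∈ Finset.range (m+1), Yf (A i) i s) * W s ∂ν
        = ∫ s, (∏ i ∈ Finset.range m, Yf (A i) i s) * Yf (A m) m s * W s ∂ν := step1
      _ = ∫ s, (∏ i ∈ Finset.range m, Yf (A i) i s) * alphaf (A m) s * W s ∂ν := step3
      _ = ∫ s, (∏ i ∈ Finset.range m, Yf (A i) i s) * (alphaf (A m) s * W s) ∂ν := by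
          congr 1; funext s; ring
      _ = ∫ s, (∏ i ∈ Finset.range m, alphaf (A i) s) * (alphaf (A m) s * W s) ∂ν := ihW
      _ = ∫ s, (∏ i ∈ Finset.range (m+1), alphaf (A i) s) * W s ∂ν := by
          congr 1; funext s; rw [Finset.prod_range_succ]; ring

end Main


end Emp

end DF

/-- If `X 0` admits a regular conditional distribution `κ` given the exchangeable
σ-algebra, then the sequence is conditionally iid given the exchangeable σ-algebra,
and indeed `κ^∞` is a regular conditional distribution of the whole sequence. -/
theorem stmt3 {Ω S : Type*} [mΩ : MeasurableSpace Ω] [MeasurableSpace S]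
    (P : Measure Ω) [IsProbabilityMeasure P] (X : ℕ → Ω → S) (hX : ∀ n, Measurable (X n))
    (hexch : Exchangeable P X)
    (κ : @Kernel Ω S (exchangeableSigma X) _)
    (hκ : @IsMarkovKernel Ω S (exchangeableSigma X) _ κ)
    (hrcd : IsRCD P (X 0) (exchangeableSigma X) κ) :
    CondIIDKernel P X (exchangeableSigma X) κ ∧ CondIID P X (exchangeableSigma X) := by
  classical
  have hXm : Measurable (fun ω i => X i ω) := measurable_pi_lambda _ hX
  have hle : exchangeableSigma X ≤ mΩ := DF.exchangeableSigma_le hX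
  set ν : Measure (ℕ → S) := P.map (fun ω i => X i ω) with hνdef
  haveI hνp : IsProbabilityMeasure ν := Measure.isProbabilityMeasure_map hXm.aemeasurable
  have hν : ∀ π : Equiv.Perm ℕ, DF.FinPerm π → ν.map (DF.permMap π) = ν :=
    fun π hπ => DF.map_perm_eq P X hX hexch π hπ
  -- facts about the indicator of an invariant set
  have hWfacts : ∀ Ainv : Set (ℕ → S), Ainv ∈ DF.Inv S →
      Measurable (Ainv.indicator (fun _ => (1:ℝ))) ∧
      (∀ s, 0 ≤ Ainv.indicator (fun _ => (1:ℝ)) s) ∧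
      (∀ s, Ainv.indicator (fun _ => (1:ℝ)) s ≤ 1) ∧
      (∀ π : Equiv.Perm ℕ, DF.FinPerm π → ∀ s,
        Ainv.indicator (fun _ => (1:ℝ)) (DF.permMap π s)
          = Ainv.indicator (fun _ => (1:ℝ)) s) := by
    rintro Ainv ⟨hm, hinv⟩
    refine ⟨measurable_const.indicator hm,
      fun s => Set.indicator_nonneg (fun _ _ => zero_le_one) s,
      fun s => Set.indicator_le_self' (fun _ _ => zero_le_one) s, ?_⟩
    intro π hπ s
    have hmem : DF.permMap π s ∈ Ainv ↔ s ∈ Ainv := Set.ext_iff.1 (hinv π hπ) s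
    by_cases h : s ∈ Ainv
    · rw [Set.indicator_of_mem (hmem.2 h), Set.indicator_of_mem h]
    · rw [Set.indicator_of_notMem (fun hc => h (hmem.1 hc)), Set.indicator_of_notMem h]
  -- set-integral identity on Ω for a single set
  have hsetint : ∀ A0 : Set S, MeasurableSet A0 → ∀ G : Set Ω,
      MeasurableSet[exchangeableSigma X] G →
      ∫ ω in G, DF.alphaf A0 (fun i => X i ω) ∂P
        = ∫ ω in G, A0.indicator (fun _ => (1:ℝ)) (X 0 ω) ∂P := by
    intro A0 hA0 G hG
    obtain ⟨Ainv, hAinvI, rfl⟩ := DF.measurableSet_exchangeableSigma_iff.1 hG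
    obtain ⟨hWm, hW0, hW1, hWinv⟩ := hWfacts Ainv hAinvI
    obtain ⟨hAinvm, hAinvinv⟩ := hAinvI
    have hmain := DF.main_induction ν hν (fun _ => A0) (fun _ => hA0) 1
      (Ainv.indicator (fun _ => (1:ℝ))) hWm hW0 hW1 hWinv
    simp only [Finset.prod_range_one] at hmain
    have hGm : MeasurableSet ((fun ω i => X i ω) ⁻¹' Ainv) := hXm hAinvm
    have htrans : ∀ f : (ℕ → S) → ℝ, Measurable f →
        ∫ s, f s * Ainv.indicator (fun _ => (1:ℝ)) s ∂ν
          = ∫ ω in (fun ω i => X i ω) ⁻¹' Ainv, f (fun i => X i ω) ∂P := by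
      intro f hf
      rw [hνdef, integral_map (f := fun s => f s * Ainv.indicator (fun _ => (1:ℝ)) s) hXm.aemeasurable (hf.mul hWm).aestronglyMeasurable,
        ← integral_indicator hGm]
      congr 1
      funext ω
      by_cases h : (fun i => X i ω) ∈ Ainv
      · rw [Set.indicator_of_mem h, Set.indicator_of_mem (h : ω ∈ _), mul_one]
      · rw [Set.indicator_of_notMem h, Set.indicator_of_notMem (h : ω ∉ _), mul_zero]
    calc ∫ ω in (fun ω i => X i ω) ⁻¹' Ainv, DF.alphaf A0 (fun i => X i ω) ∂P
        = ∫ s, DF.alphaf A0 s * Ainv.indicator (fun _ => (1:ℝ)) s ∂ν :=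
          (htrans _ (DF.measurable_alphaf hA0)).symm
      _ = ∫ s, DF.Yf A0 0 s * Ainv.indicator (fun _ => (1:ℝ)) s ∂ν := hmain.symm
      _ = ∫ ω in (fun ω i => X i ω) ⁻¹' Ainv, A0.indicator (fun _ => (1:ℝ)) (X 0 ω) ∂P :=
          htrans _ (DF.measurable_Yf hA0 0)
  -- `alphaf ∘ X` is a version of the conditional expectation
  have hcondexp : ∀ A0 : Set S, MeasurableSet A0 →
      (fun ω => DF.alphaf A0 (fun i => X i ω)) =ᵐ[P]
        MeasureTheory.condExp (exchangeableSigma X) P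
          (fun ω => A0.indicator (fun _ => (1:ℝ)) (X 0 ω)) := by
    intro A0 hA0
    refine ae_eq_condExp_of_forall_setIntegral_eq hle ?_ ?_ ?_ ?_
    · refine (integrable_const (1:ℝ)).mono'
        ((measurable_const.indicator hA0).comp (hX 0)).aestronglyMeasurable
        (Eventually.of_forall fun ω => ?_)
      rw [Real.norm_eq_abs, abs_le]
      exact ⟨le_trans (by norm_num : (-1:ℝ) ≤ 0)
          (Set.indicator_nonneg (fun _ _ => zero_le_one) _),
        Set.indicator_le_self' (fun _ _ => zero_le_one) _⟩
    · intro t ht hμt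
      apply Integrable.integrableOn
      refine (integrable_const (1:ℝ)).mono'
        ((DF.measurable_alphaf hA0).comp hXm).aestronglyMeasurable
        (Eventually.of_forall fun ω => ?_)
      rw [Real.norm_eq_abs, abs_le]
      exact ⟨by linarith [DF.alphaf_nonneg A0 (fun i => X i ω)],
        DF.alphaf_le_one A0 (fun i => X i ω)⟩
    · intro t ht hμt
      exact hsetint A0 hA0 t ht
    · exact MeasureTheory.StronglyMeasurable.aestronglyMeasurable
        (DF.measurable_exch_comp (DF.measurable_alphaf hA0)
          (fun π hπ s => DF.alphaf_perm hπ s)).stronglyMeasurable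
  have hker : ∀ A0 : Set S, MeasurableSet A0 →
      (fun ω => (κ ω A0).toReal) =ᵐ[P] (fun ω => DF.alphaf A0 (fun i => X i ω)) :=
    fun A0 hA0 => (hrcd A0 hA0).trans (hcondexp A0 hA0).symm
  -- the main statement
  have hmainK : CondIIDKernel P X (exchangeableSigma X) κ := by
    intro m A hAmeas G hG
    obtain ⟨Ainv, hAinvI, rfl⟩ := DF.measurableSet_exchangeableSigma_iff.1 hG
    obtain ⟨hWm, hW0, hW1, hWinv⟩ := hWfacts Ainv hAinvI
    obtain ⟨hAinvm, hAinvinv⟩ := hAinvI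
    set A' : ℕ → Set S := fun j => if h : j < m then A ⟨j, h⟩ else Set.univ with hA'def
    have hA' : ∀ j, MeasurableSet (A' j) := by
      intro j
      rw [hA'def]
      dsimp only
      split_ifs with h
      exacts [hAmeas _, MeasurableSet.univ]
    have hA'fin : ∀ i : Fin m, A' (i : ℕ) = A i := by
      intro i
      rw [hA'def]
      simp [i.isLt]
    set T : Set (ℕ → S) := ⋂ i : Fin m, {s | s (i : ℕ) ∈ A i} with hTdef
    have hTm : MeasurableSet T :=
      MeasurableSet.iInter (fun i => (measurable_pi_apply (i : ℕ)) (hAmeas i))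
    have hGm : MeasurableSet ((fun ω i => X i ω) ⁻¹' Ainv) := hXm hAinvm
    have hset : ((fun ω i => X i ω) ⁻¹' Ainv) ∩ (⋂ i, {ω | X (i : ℕ) ω ∈ A i})
        = (fun ω i => X i ω) ⁻¹' (Ainv ∩ T) := by
      rw [Set.preimage_inter]
      congr 1
      rw [hTdef, Set.preimage_iInter]
      rfl
    have hind : ∀ s : ℕ → S, (Ainv ∩ T).indicator (fun _ => (1:ℝ)) s
        = (∏ j ∈ Finset.range m, DF.Yf (A' j) j s) * Ainv.indicator (fun _ => (1:ℝ)) s := by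
      intro s
      by_cases hsA : s ∈ Ainv
      · by_cases hsT : s ∈ T
        · rw [Set.indicator_of_mem (Set.mem_inter hsA hsT)]
          have h1 : ∀ j ∈ Finset.range m, DF.Yf (A' j) j s = 1 := by
            intro j hj
            have hj' := Finset.mem_range.1 hj
            have hmem : s j ∈ A' j := by
              rw [hA'def]
              dsimp only
              rw [dif_pos hj']
              exact Set.mem_iInter.1 hsT ⟨j, hj'⟩
            unfold DF.Yf
            rw [Set.indicator_of_mem hmem]
          rw [Finset.prod_congr rfl h1, Set.indicator_of_mem hsA]
          simp
        · rw [Set.indicator_of_notMem (fun hc => hsT hc.2)]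
          obtain ⟨i, hi⟩ : ∃ i : Fin m, s (i : ℕ) ∉ A i := by
            by_contra hc
            push_neg at hc
            exact hsT (Set.mem_iInter.2 (fun i => hc i))
          have hz : DF.Yf (A' (i : ℕ)) (i : ℕ) s = 0 := by
            unfold DF.Yf
            rw [Set.indicator_of_notMem]
            rw [hA'fin i]
            exact hi
          rw [Finset.prod_eq_zero (Finset.mem_range.2 i.isLt) hz, zero_mul]
      · rw [Set.indicator_of_notMem (fun hc => hsA hc.1), Set.indicator_of_notMem hsA,
          mul_zero]
    have hmain := DF.main_induction ν hν A' hA' m (Ainv.indicator (fun _ => (1:ℝ)))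
      hWm hW0 hW1 hWinv
    have hreal1 : (P (((fun ω i => X i ω) ⁻¹' Ainv) ∩ ⋂ i, {ω | X (i : ℕ) ω ∈ A i})).toReal
        = ∫ s, (∏ j ∈ Finset.range m, DF.Yf (A' j) j s)
            * Ainv.indicator (fun _ => (1:ℝ)) s ∂ν := by
      rw [hset]
      have hmap : P ((fun ω i => X i ω) ⁻¹' (Ainv ∩ T)) = ν (Ainv ∩ T) :=
        (Measure.map_apply hXm (hAinvm.inter hTm)).symm
      rw [hmap, ← measureReal_def, ← integral_indicator_one (hAinvm.inter hTm)]
      congr 1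
      funext s
      exact hind s
    have halpha_meas : Measurable (fun s => ∏ j ∈ Finset.range m, DF.alphaf (A' j) s) :=
      Finset.measurable_prod _ (fun j _ => DF.measurable_alphaf (hA' j))
    have hreal2 : ∫ s, (∏ j ∈ Finset.range m, DF.alphaf (A' j) s)
          * Ainv.indicator (fun _ => (1:ℝ)) s ∂ν
        = ∫ ω in (fun ω i => X i ω) ⁻¹' Ainv,
            ∏ j ∈ Finset.range m, DF.alphaf (A' j) (fun i => X i ω) ∂P := by
      rw [hνdef, integral_map (f := fun s => (∏ j ∈ Finset.range m, DF.alphaf (A' j) s) * Ainv.indicator (fun _ => (1:ℝ)) s) hXm.aemeasurable (halpha_meas.mul hWm).aestronglyMeasurable,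
        ← integral_indicator hGm]
      congr 1
      funext ω
      by_cases h : (fun i => X i ω) ∈ Ainv
      · rw [Set.indicator_of_mem h, Set.indicator_of_mem (h : ω ∈ _), mul_one]
      · rw [Set.indicator_of_notMem h, Set.indicator_of_notMem (h : ω ∉ _), mul_zero]
    have haeall : ∀ᵐ ω ∂P, ∀ j : ℕ,
        (κ ω (A' j)).toReal = DF.alphaf (A' j) (fun i => X i ω) :=
      MeasureTheory.ae_all_iff.2 (fun j => hker (A' j) (hA' j))
    have hreal3 : ∫ ω in (fun ω i => X i ω) ⁻¹' Ainv,
          ∏ j ∈ Finset.range m, DF.alphaf (A' j) (fun i => X i ω) ∂P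
        = ∫ ω in (fun ω i => X i ω) ⁻¹' Ainv,
            ∏ j ∈ Finset.range m, (κ ω (A' j)).toReal ∂P := by
      refine integral_congr_ae (ae_restrict_of_ae ?_)
      filter_upwards [haeall] with ω hω
      exact (Finset.prod_congr rfl (fun j _ => hω j)).symm
    haveI := hκ
    have hκle : ∀ (ω : Ω) (j : ℕ), κ ω (A' j) ≤ 1 := fun ω j => prob_le_one
    have hκprod_eq : ∀ ω : Ω, (∏ i : Fin m, κ ω (A i))
        = ENNReal.ofReal (∏ j ∈ Finset.range m, (κ ω (A' j)).toReal) := by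
      intro ω
      have h1 : (∏ i : Fin m, κ ω (A i)) = ∏ j ∈ Finset.range m, κ ω (A' j) := by
        rw [← Fin.prod_univ_eq_prod_range (fun j => κ ω (A' j)) m]
        exact Finset.prod_congr rfl (fun i _ => by rw [hA'fin i])
      rw [h1, ← ENNReal.toReal_prod, ENNReal.ofReal_toReal]
      exact (ENNReal.prod_lt_top (fun j _ => measure_lt_top _ _)).ne
    have hκmeas : Measurable (fun ω => ∏ j ∈ Finset.range m, (κ ω (A' j)).toReal) := by
      apply Finset.measurable_prod
      intro j _
      exact ENNReal.measurable_toReal.comp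
        ((Kernel.measurable_coe κ (hA' j)).mono hle le_rfl)
    have hκprodle : ∀ ω : Ω, ∏ j ∈ Finset.range m, (κ ω (A' j)).toReal ≤ 1 := by
      intro ω
      refine Finset.prod_le_one (fun j _ => ENNReal.toReal_nonneg) (fun j _ => ?_)
      have h2 := ENNReal.toReal_mono ENNReal.one_ne_top (hκle ω j)
      simpa using h2
    have hκint : IntegrableOn (fun ω => ∏ j ∈ Finset.range m, (κ ω (A' j)).toReal)
        ((fun ω i => X i ω) ⁻¹' Ainv) P := by
      apply Integrable.integrableOn
      refine (integrable_const (1:ℝ)).mono' hκmeas.aestronglyMeasurable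
        (Eventually.of_forall fun ω => ?_)
      rw [Real.norm_eq_abs,
        abs_of_nonneg (Finset.prod_nonneg fun j _ => ENNReal.toReal_nonneg)]
      exact hκprodle ω
    have hRHS : ∫⁻ ω in (fun ω i => X i ω) ⁻¹' Ainv, ∏ i : Fin m, κ ω (A i) ∂P
        = ENNReal.ofReal (∫ ω in (fun ω i => X i ω) ⁻¹' Ainv,
            ∏ j ∈ Finset.range m, (κ ω (A' j)).toReal ∂P) := by
      rw [ofReal_integral_eq_lintegral_ofReal hκint
        (Filter.Eventually.of_forall fun ω => Finset.prod_nonneg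
          fun j _ => ENNReal.toReal_nonneg)]
      exact lintegral_congr (fun ω => hκprod_eq ω)
    rw [hRHS, ← hreal3, ← hreal2, ← hmain, ← hreal1,
      ENNReal.ofReal_toReal (measure_ne_top P _)]
  exact ⟨hmainK, ⟨κ, hκ, hmainK⟩⟩
end

section
/- Let (X_n) be an exchangeable process on (Ω, Σ, P) with values in (S, 𝒮), and let (B_m) be a sequence of measurable sets with P(X_1 ∈ B_m) → 0 as m → ∞. Then for P-almost all ω: for every ε > 0 there exists m such that for all n, the empirical measure μ_{ω,n}(B_m) < ε, where μ_{ω,n}(B) = (1/n) Σ_{i≤n} 1{X_i(ω) ∈ B}. -/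
open MeasureTheory ProbabilityTheory Filter Finset Topology
open scoped ENNReal NNReal

lemma risingSun (ε : ℝ) (hε : 0 < ε) (N : ℕ) :
    ∀ (M : ℕ) (y : ℕ → ℝ), (∀ i, 0 ≤ y i) →
      ∀ J : Finset ℕ,
        (∀ j ∈ J, j < M ∧ ∃ n, 1 ≤ n ∧ n ≤ N ∧
            ε * n ≤ ∑ i ∈ Finset.range n, y (j + i)) →
        ε * J.card ≤ ∑ i ∈ Finset.range (M + N), y i := by
  intro M
  induction M using Nat.strong_induction_on with
  | _ M ih =>
    intro y hy J hJ
    rcases J.eq_empty_or_nonempty with h | h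
    · simp only [h, Finset.card_empty, Nat.cast_zero, mul_zero]
      exact Finset.sum_nonneg fun i _ => hy i
    · set j₁ := J.min' h with hj₁def
      obtain ⟨hj₁M, n₁, hn₁1, hn₁N, hsum⟩ := hJ j₁ (J.min'_mem h)
      have hjle : ∀ j ∈ J, j₁ ≤ j := fun j hj => J.min'_le j hj
      have hIcosum : ε * n₁ ≤ ∑ i ∈ Finset.Ico j₁ (j₁ + n₁), y i := by
        rw [Finset.sum_Ico_eq_sum_range]
        simpa using hsum
      have hsub : Finset.Ico j₁ (j₁ + n₁) ⊆ Finset.range (M + N) := by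
        intro x hx
        simp only [Finset.mem_Ico] at hx
        simp only [Finset.mem_range]
        calc x < j₁ + n₁ := hx.2
        _ ≤ (M - 1) + N := by omega
        _ < M + N := by omega
      by_cases hcase : j₁ + n₁ ≤ M
      · set b := j₁ + n₁ with hbdef
        set J' := (J.filter (fun j => b ≤ j)).image (fun j => j - b) with hJ'def
        have hM' : M - b < M := by omega
        have hcardJ' : J'.card = (J.filter (fun j => b ≤ j)).card := by
          apply Finset.card_image_of_injOn
          intro a ha c hc hac
          simp only [Finset.mem_coe, Finset.mem_filter] at ha hc
          have hac' : a - b = c - b := hac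
          omega
        have hJ'cond : ∀ j'' ∈ J', j'' < M - b ∧ ∃ n, 1 ≤ n ∧ n ≤ N ∧
            ε * n ≤ ∑ i ∈ Finset.range n, (fun i => y (b + i)) (j'' + i) := by
          intro j'' hj''
          simp only [hJ'def, Finset.mem_image, Finset.mem_filter] at hj''
          obtain ⟨j, ⟨hjJ, hbj⟩, rfl⟩ := hj''
          obtain ⟨hjM, n, hn1, hnN, hns⟩ := hJ j hjJ
          dsimp only
          refine ⟨by omega, n, hn1, hnN, ?_⟩
          simpa only [show ∀ i, b + (j - b + i) = j + i by intro i; omega] using hns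
        have ih' := ih (M - b) hM' (fun i => y (b + i)) (fun i => hy _) J' hJ'cond
        have hsumIco : ∑ i ∈ Finset.range ((M - b) + N), y (b + i)
            = ∑ i ∈ Finset.Ico b (M + N), y i := by
          rw [Finset.sum_Ico_eq_sum_range,
            show M + N - b = (M - b) + N from by omega]
        have hcardle : J.card ≤ n₁ + J'.card := by
          rw [hcardJ']
          have hsubJ : J ⊆ Finset.Ico j₁ b ∪ J.filter (fun j => b ≤ j) := by
            intro j hj
            rcases lt_or_ge j b with hlt | hge
            · exact Finset.mem_union_left _ (Finset.mem_Ico.2 ⟨hjle j hj, hlt⟩)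
            · exact Finset.mem_union_right _ (Finset.mem_filter.2 ⟨hj, hge⟩)
          calc J.card ≤ (Finset.Ico j₁ b ∪ J.filter (fun j => b ≤ j)).card :=
                Finset.card_le_card hsubJ
          _ ≤ (Finset.Ico j₁ b).card + (J.filter (fun j => b ≤ j)).card :=
                Finset.card_union_le _ _
          _ = n₁ + (J.filter (fun j => b ≤ j)).card := by
                rw [Nat.card_Ico]; congr 1; omega
        calc ε * J.card ≤ ε * (n₁ + J'.card) := by
              apply mul_le_mul_of_nonneg_left _ hε.le
              exact_mod_cast hcardle
        _ = ε * n₁ + ε * J'.card := by ring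
        _ ≤ (∑ i ∈ Finset.Ico j₁ b, y i) + ∑ i ∈ Finset.Ico b (M + N), y i := by
              apply add_le_add hIcosum
              calc ε * J'.card ≤ ∑ i ∈ Finset.range ((M - b) + N), y (b + i) := ih'
              _ = _ := hsumIco
        _ = ∑ i ∈ Finset.Ico j₁ (M + N), y i := by
              rw [Finset.sum_Ico_consecutive]
              · omega
              · omega
        _ ≤ ∑ i ∈ Finset.range (M + N), y i := by
              apply Finset.sum_le_sum_of_subset_of_nonneg
              · intro x hx
                simp only [Finset.mem_Ico] at hx
                simp only [Finset.mem_range]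
                omega
              · intro i _ _; exact hy i
      · -- j₁ + n₁ > M : all of J fits in Ico j₁ (j₁ + n₁)
        have hsubJ : J ⊆ Finset.Ico j₁ (j₁ + n₁) := by
          intro j hj
          have := (hJ j hj).1
          exact Finset.mem_Ico.2 ⟨hjle j hj, by omega⟩
        have hcard : J.card ≤ n₁ := by
          calc J.card ≤ (Finset.Ico j₁ (j₁ + n₁)).card := Finset.card_le_card hsubJ
          _ = n₁ := by rw [Nat.card_Ico]; omega
        calc ε * J.card ≤ ε * n₁ := by
              apply mul_le_mul_of_nonneg_left _ hε.le
              exact_mod_cast hcard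
        _ ≤ ∑ i ∈ Finset.Ico j₁ (j₁ + n₁), y i := hIcosum
        _ ≤ ∑ i ∈ Finset.range (M + N), y i := by
              apply Finset.sum_le_sum_of_subset_of_nonneg hsub
              intro i _ _; exact hy i


section Aux

variable {Ω S : Type*} [mΩ : MeasurableSpace Ω] [MeasurableSpace S]

/-- The event that some empirical average of `C` along `X (j+·)` within horizon `N`
is at least `ε`. -/
def badSet (X : ℕ → Ω → S) (C : Set S) (ε : ℝ) (N j : ℕ) : Set Ω :=
  {ω | ∃ n, 1 ≤ n ∧ n ≤ N ∧
    ε * n ≤ ∑ i ∈ Finset.range n, C.indicator (fun _ => (1 : ℝ)) (X (j + i) ω)}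

lemma measurableSet_badSet (X : ℕ → Ω → S) (hX : ∀ n, Measurable (X n)) {C : Set S}
    (hC : MeasurableSet C) (ε : ℝ) (N j : ℕ) :
    MeasurableSet (badSet X C ε N j) := by
  have h : badSet X C ε N j = ⋃ n ∈ Set.Icc 1 N,
      {ω | ε * n ≤ ∑ i ∈ Finset.range n, C.indicator (fun _ => (1:ℝ)) (X (j + i) ω)} := by
    ext ω
    simp only [badSet, Set.mem_setOf_eq, Set.mem_iUnion, Set.mem_Icc, exists_prop]
    tauto
  rw [h]
  refine MeasurableSet.biUnion (Set.to_countable _) fun n _ => ?_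
  exact measurableSet_le measurable_const
    (Finset.measurable_sum _ fun i _ => (measurable_const.indicator hC).comp (hX _))

lemma sumFinIte {K n : ℕ} (hnK : n ≤ K) (g : ℕ → ℝ) :
    ∑ i : Fin K, (if (i : ℕ) < n then g (i : ℕ) else 0) = ∑ i ∈ Finset.range n, g i := by
  rw [Fin.sum_univ_eq_sum_range (fun i => if i < n then g i else 0) K, ← Finset.sum_filter]
  congr 1
  ext i
  simp only [Finset.mem_filter, Finset.mem_range]
  omega

lemma exch_marginal (P : Measure Ω) (X : ℕ → Ω → S) (hX : ∀ n, Measurable (X n))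
    (hexch : Exchangeable P X) {C : Set S} (hC : MeasurableSet C) (k : ℕ) :
    P {ω | X k ω ∈ C} = P {ω | X 0 ω ∈ C} := by
  set σ : Equiv.Perm (Fin (k+1)) := Equiv.swap 0 ⟨k, Nat.lt_succ_self k⟩ with hσ
  have hA : MeasurableSet ((fun f : Fin (k+1) → S => f 0) ⁻¹' C) :=
    (measurable_pi_apply 0) hC
  have h1 : Measurable (fun ω (i : Fin (k+1)) => X i ω) :=
    measurable_pi_lambda _ fun i => hX _
  have h2 : Measurable (fun ω (i : Fin (k+1)) => X (σ i) ω) :=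
    measurable_pi_lambda _ fun i => hX _
  have happ := congrArg (fun μ : Measure (Fin (k+1) → S) =>
    μ ((fun f : Fin (k+1) → S => f 0) ⁻¹' C)) (hexch (k+1) σ)
  rw [Measure.map_apply h1 hA, Measure.map_apply h2 hA] at happ
  have e1 : (fun ω (i : Fin (k+1)) => X i ω) ⁻¹' ((fun f : Fin (k+1) → S => f 0) ⁻¹' C)
      = {ω | X 0 ω ∈ C} := by
    ext ω; simp [Set.mem_preimage]
  have e2 : (fun ω (i : Fin (k+1)) => X (σ i) ω) ⁻¹' ((fun f : Fin (k+1) → S => f 0) ⁻¹' C)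
      = {ω | X k ω ∈ C} := by
    ext ω
    simp only [Set.mem_preimage, Set.mem_setOf_eq, hσ, Equiv.swap_apply_left]
  rw [e1, e2] at happ
  exact happ.symm

open Fin.NatCast in
lemma badSet_prob_eq (P : Measure Ω) (X : ℕ → Ω → S) (hX : ∀ n, Measurable (X n))
    (hexch : Exchangeable P X) {C : Set S} (hC : MeasurableSet C) (ε : ℝ)
    (N j : ℕ) (hN : 1 ≤ N) :
    P (badSet X C ε N j) = P (badSet X C ε N 0) := by
  set K := j + N with hK
  haveI : NeZero K := ⟨by omega⟩
  set g : S → ℝ := C.indicator (fun _ => (1:ℝ)) with hg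
  set A : Set (Fin K → S) := {f | ∃ n, 1 ≤ n ∧ n ≤ N ∧
    ε * n ≤ ∑ i : Fin K, if (i : ℕ) < n then g (f i) else 0} with hA
  have hAm : MeasurableSet A := by
    have h : A = ⋃ n ∈ Set.Icc 1 N,
        {f : Fin K → S | ε * n ≤ ∑ i : Fin K, if (i : ℕ) < n then g (f i) else 0} := by
      ext f
      simp only [hA, Set.mem_setOf_eq, Set.mem_iUnion, Set.mem_Icc, exists_prop]
      tauto
    rw [h]
    refine MeasurableSet.biUnion (Set.to_countable _) fun n _ => ?_
    refine measurableSet_le measurable_const (Finset.measurable_sum _ fun i _ => ?_)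
    by_cases hin : (i : ℕ) < n
    · simp only [hin, if_true]
      exact (measurable_const.indicator hC).comp (measurable_pi_apply i)
    · simp only [hin, if_false]
      exact measurable_const
  set σ : Equiv.Perm (Fin K) := Equiv.addLeft (j : Fin K) with hσ
  have h1 : Measurable (fun ω (i : Fin K) => X i ω) :=
    measurable_pi_lambda _ fun i => hX _
  have h2 : Measurable (fun ω (i : Fin K) => X (σ i) ω) :=
    measurable_pi_lambda _ fun i => hX _
  have happ := congrArg (fun μ : Measure (Fin K → S) => μ A) (hexch K σ)
  rw [Measure.map_apply h1 hAm, Measure.map_apply h2 hAm] at happ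
  have hval : ∀ i : Fin K, (i : ℕ) < N → ((σ i : Fin K) : ℕ) = j + (i : ℕ) := by
    intro i hi
    have hjK : j < K := by omega
    have : (σ i : Fin K) = (j : Fin K) + i := rfl
    rw [this, Fin.val_add, Fin.val_natCast, Nat.mod_eq_of_lt hjK, Nat.mod_eq_of_lt (by omega)]
  have e1 : (fun ω (i : Fin K) => X i ω) ⁻¹' A = badSet X C ε N 0 := by
    ext ω
    simp only [hA, Set.mem_preimage, Set.mem_setOf_eq, badSet, zero_add]
    refine exists_congr fun n => and_congr_right fun hn1 => and_congr_right fun hnN => ?_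
    have hs : (∑ i : Fin K, if (i : ℕ) < n then g (X (i : ℕ) ω) else 0)
        = ∑ i ∈ Finset.range n, g (X i ω) :=
      sumFinIte (show n ≤ K by omega) (fun t => g (X t ω))
    rw [hs]
  have e2 : (fun ω (i : Fin K) => X (σ i) ω) ⁻¹' A = badSet X C ε N j := by
    ext ω
    simp only [hA, Set.mem_preimage, Set.mem_setOf_eq, badSet]
    refine exists_congr fun n => and_congr_right fun hn1 => and_congr_right fun hnN => ?_
    have hcongr : (∑ i : Fin K, if (i : ℕ) < n then g (X ((σ i : Fin K) : ℕ) ω) else 0)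
        = ∑ i : Fin K, if (i : ℕ) < n then g (X (j + (i : ℕ)) ω) else 0 := by
      refine Finset.sum_congr rfl fun i _ => ?_
      by_cases hin : (i : ℕ) < n
      · simp only [hin, if_true, hval i (by omega)]
      · simp only [hin, if_false]
    rw [hcongr]
    have hs : (∑ i : Fin K, if (i : ℕ) < n then g (X (j + (i : ℕ)) ω) else 0)
        = ∑ i ∈ Finset.range n, g (X (j + i) ω) :=
      sumFinIte (show n ≤ K by omega) (fun t => g (X (j + t) ω))
    rw [hs]
  rw [e1, e2] at happ
  exact happ.symm

end Aux

section Aux2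

variable {Ω S : Type*} [mΩ : MeasurableSpace Ω] [MeasurableSpace S]

open scoped Classical in
lemma maximal_bound (P : Measure Ω) [IsProbabilityMeasure P] (X : ℕ → Ω → S)
    (hX : ∀ n, Measurable (X n)) (hexch : Exchangeable P X) {C : Set S}
    (hC : MeasurableSet C) {ε : ℝ} (hε : 0 < ε) (N : ℕ) :
    ENNReal.ofReal ε * P (badSet X C ε N 0) ≤ 2 * P {ω | X 0 ω ∈ C} := by
  rcases Nat.eq_zero_or_pos N with rfl | hN
  · have hempty : badSet X C ε 0 0 = ∅ := by
      ext ω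
      simp only [badSet, Set.mem_setOf_eq, Set.mem_empty_iff_false, iff_false]
      rintro ⟨n, h1, h2, -⟩
      omega
    simp [hempty]
  have hmeas_bad : ∀ j, MeasurableSet (badSet X C ε N j) :=
    fun j => measurableSet_badSet X hX hC ε N j
  have hmeasC : ∀ i : ℕ, MeasurableSet {ω | X i ω ∈ C} := fun i => (hX i) hC
  have hpt : ∀ ω, ENNReal.ofReal ε *
      ∑ j ∈ Finset.range N, (badSet X C ε N j).indicator (fun _ => (1:ℝ≥0∞)) ω
      ≤ ∑ i ∈ Finset.range (N + N), ({ω' | X i ω' ∈ C}).indicator (fun _ => (1:ℝ≥0∞)) ω := by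
    intro ω
    set y : ℕ → ℝ := fun i => C.indicator (fun _ => (1:ℝ)) (X i ω) with hy
    have hynn : ∀ i, 0 ≤ y i := fun i => Set.indicator_nonneg (fun _ _ => zero_le_one) _
    set J : Finset ℕ := (Finset.range N).filter (fun j => ω ∈ badSet X C ε N j) with hJ
    have hcond : ∀ j ∈ J, j < N ∧ ∃ n, 1 ≤ n ∧ n ≤ N ∧
        ε * n ≤ ∑ i ∈ Finset.range n, y (j + i) := by
      intro j hj
      simp only [hJ, Finset.mem_filter, Finset.mem_range] at hj
      exact ⟨hj.1, hj.2⟩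
    have hRS := risingSun ε hε N N y hynn J hcond
    have hcount : (∑ j ∈ Finset.range N,
        (badSet X C ε N j).indicator (fun _ => (1:ℝ≥0∞)) ω) = (J.card : ℝ≥0∞) := by
      simp only [Set.indicator_apply]
      rw [Finset.sum_boole]
    rw [hcount]
    have h1 : ENNReal.ofReal ε * (J.card : ℝ≥0∞) = ENNReal.ofReal (ε * J.card) := by
      rw [ENNReal.ofReal_mul hε.le, ENNReal.ofReal_natCast]
    rw [h1]
    refine le_trans (ENNReal.ofReal_le_ofReal hRS) (le_of_eq ?_)
    rw [ENNReal.ofReal_sum_of_nonneg (fun i _ => hynn i)]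
    refine Finset.sum_congr rfl fun i _ => ?_
    by_cases h : X i ω ∈ C
    · simp [hy, Set.indicator_of_mem, h]
    · simp [hy, Set.indicator_of_notMem, h]
  have hint1 : ∫⁻ ω, (∑ j ∈ Finset.range N,
      (badSet X C ε N j).indicator (fun _ => (1:ℝ≥0∞)) ω) ∂P
      = ∑ j ∈ Finset.range N, P (badSet X C ε N j) := by
    rw [lintegral_finset_sum _ (fun j _ => measurable_const.indicator (hmeas_bad j))]
    exact Finset.sum_congr rfl fun j _ => lintegral_indicator_one (hmeas_bad j)
  have hint2 : ∫⁻ ω, (∑ i ∈ Finset.range (N + N),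
      ({ω' | X i ω' ∈ C}).indicator (fun _ => (1:ℝ≥0∞)) ω) ∂P
      = ∑ i ∈ Finset.range (N + N), P {ω' | X i ω' ∈ C} := by
    rw [lintegral_finset_sum _ (fun i _ => measurable_const.indicator (hmeasC i))]
    exact Finset.sum_congr rfl fun i _ => lintegral_indicator_one (hmeasC i)
  have hchain : (N : ℝ≥0∞) * (ENNReal.ofReal ε * P (badSet X C ε N 0))
      ≤ (N : ℝ≥0∞) * (2 * P {ω | X 0 ω ∈ C}) := by
    calc (N : ℝ≥0∞) * (ENNReal.ofReal ε * P (badSet X C ε N 0))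
        = ENNReal.ofReal ε * ∑ j ∈ Finset.range N, P (badSet X C ε N j) := by
          rw [Finset.sum_congr rfl fun j _ => badSet_prob_eq P X hX hexch hC ε N j hN,
            Finset.sum_const, Finset.card_range, nsmul_eq_mul]
          ring
      _ = ENNReal.ofReal ε * ∫⁻ ω, (∑ j ∈ Finset.range N,
            (badSet X C ε N j).indicator (fun _ => (1:ℝ≥0∞)) ω) ∂P := by rw [hint1]
      _ = ∫⁻ ω, ENNReal.ofReal ε * (∑ j ∈ Finset.range N,
            (badSet X C ε N j).indicator (fun _ => (1:ℝ≥0∞)) ω) ∂P :=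
          (lintegral_const_mul' _ _ ENNReal.ofReal_ne_top).symm
      _ ≤ ∫⁻ ω, (∑ i ∈ Finset.range (N + N),
            ({ω' | X i ω' ∈ C}).indicator (fun _ => (1:ℝ≥0∞)) ω) ∂P := lintegral_mono hpt
      _ = ∑ i ∈ Finset.range (N + N), P {ω' | X i ω' ∈ C} := hint2
      _ = (N : ℝ≥0∞) * (2 * P {ω | X 0 ω ∈ C}) := by
          rw [Finset.sum_congr rfl fun i _ => exch_marginal P X hX hexch hC i,
            Finset.sum_const, Finset.card_range, nsmul_eq_mul]
          push_cast
          ring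
  exact (ENNReal.mul_le_mul_iff_right (Nat.cast_ne_zero.2 (by omega)) (ENNReal.natCast_ne_top N)).1 hchain

lemma iSup_bound (P : Measure Ω) [IsProbabilityMeasure P] (X : ℕ → Ω → S)
    (hX : ∀ n, Measurable (X n)) (hexch : Exchangeable P X) {C : Set S}
    (hC : MeasurableSet C) {ε : ℝ} (hε : 0 < ε) :
    ENNReal.ofReal ε * P {ω | ∃ n : ℕ, ε ≤ empAvg X C ω n}
      ≤ 2 * P {ω | X 0 ω ∈ C} := by
  have hset : {ω | ∃ n : ℕ, ε ≤ empAvg X C ω n} = ⋃ N, badSet X C ε N 0 := by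
    ext ω
    simp only [Set.mem_setOf_eq, Set.mem_iUnion, badSet, zero_add]
    constructor
    · rintro ⟨n, hn⟩
      have hn0 : n ≠ 0 := by
        rintro rfl
        rw [empAvg] at hn
        simp only [Finset.range_zero, Finset.sum_empty, Nat.cast_zero, div_zero] at hn
        linarith
      refine ⟨n, n, Nat.one_le_iff_ne_zero.2 hn0, le_rfl, ?_⟩
      rw [empAvg, le_div_iff₀ (by exact_mod_cast Nat.pos_of_ne_zero hn0)] at hn
      exact hn
    · rintro ⟨N, n, hn1, hnN, hs⟩
      refine ⟨n, ?_⟩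
      rw [empAvg, le_div_iff₀ (by exact_mod_cast Nat.pos_of_ne_zero (by omega))]
      exact hs
  have hdir : Directed (· ⊆ ·) (fun N => badSet X C ε N 0) := by
    refine Monotone.directed_le fun N M hNM ω hω => ?_
    obtain ⟨n, h1, h2, h3⟩ := hω
    exact ⟨n, h1, le_trans h2 hNM, h3⟩
  rw [hset, hdir.measure_iUnion, ENNReal.mul_iSup]
  exact iSup_le fun N => maximal_bound P X hX hexch hC hε N

end Aux2

/-- Uniform-in-`n` smallness of empirical measures along sets of vanishing
probability, almost surely. -/
theorem stmt7 {Ω S : Type*} [mΩ : MeasurableSpace Ω] [MeasurableSpace S]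
    (P : Measure Ω) [IsProbabilityMeasure P] (X : ℕ → Ω → S) (hX : ∀ n, Measurable (X n))
    (hexch : Exchangeable P X) (B : ℕ → Set S) (hB : ∀ m, MeasurableSet (B m))
    (hlim : Filter.Tendsto (fun m => P {ω | X 0 ω ∈ B m}) Filter.atTop (𝓝 0)) :
    ∀ᵐ ω ∂P, ∀ ε : ℝ, 0 < ε → ∃ m, ∀ n : ℕ, empAvg X (B m) ω n < ε := by
  classical
  have hchoice : ∀ k : ℕ, ∃ m, P {ω | X 0 ω ∈ B m}
      < (2⁻¹ : ℝ≥0∞) ^ (k + 1) / ((k + 1 : ℕ) : ℝ≥0∞) := by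
    intro k
    have hpos : (0 : ℝ≥0∞) < (2⁻¹ : ℝ≥0∞) ^ (k + 1) / ((k + 1 : ℕ) : ℝ≥0∞) :=
      ENNReal.div_pos (pow_ne_zero _ (by norm_num)) (ENNReal.natCast_ne_top _)
    exact (hlim.eventually (gt_mem_nhds hpos)).exists
  choose m hm using hchoice
  set A : ℕ → Set Ω := fun k =>
    {ω | ∃ n : ℕ, (((k + 1 : ℕ) : ℝ))⁻¹ ≤ empAvg X (B (m k)) ω n} with hA
  have hAk : ∀ k, P (A k) ≤ (2⁻¹ : ℝ≥0∞) ^ k := by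
    intro k
    set c : ℝ≥0∞ := ((k + 1 : ℕ) : ℝ≥0∞) with hc
    have hc0 : c ≠ 0 := Nat.cast_ne_zero.2 (Nat.succ_ne_zero k)
    have hctop : c ≠ ∞ := ENNReal.natCast_ne_top _
    have hεk : (0 : ℝ) < (((k + 1 : ℕ) : ℝ))⁻¹ := by positivity
    have h1 := iSup_bound P X hX hexch (hB (m k)) hεk
    have hofr : ENNReal.ofReal ((((k + 1 : ℕ) : ℝ))⁻¹) = c⁻¹ := by
      rw [ENNReal.ofReal_inv_of_pos (by positivity), ENNReal.ofReal_natCast]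
    rw [hofr] at h1
    set q : ℝ≥0∞ := (2⁻¹ : ℝ≥0∞) ^ (k + 1) with hq
    calc P (A k) = c * (c⁻¹ * P (A k)) := by
          rw [← mul_assoc, ENNReal.mul_inv_cancel hc0 hctop, one_mul]
    _ ≤ c * (2 * P {ω | X 0 ω ∈ B (m k)}) := mul_le_mul_right h1 c
    _ ≤ c * (2 * (q / c)) := mul_le_mul_right (mul_le_mul_right (hm k).le 2) c
    _ = (2 * q) * (c * c⁻¹) := by rw [div_eq_mul_inv]; ring
    _ = 2 * q := by rw [ENNReal.mul_inv_cancel hc0 hctop, mul_one]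
    _ = (2⁻¹ : ℝ≥0∞) ^ k := by
          rw [hq, pow_succ, mul_comm, mul_assoc,
            ENNReal.inv_mul_cancel two_ne_zero ENNReal.ofNat_ne_top, mul_one]
  have hsum : (∑' k, P (A k)) ≠ ∞ := by
    refine ne_top_of_le_ne_top ?_ (ENNReal.tsum_le_tsum hAk)
    rw [ENNReal.tsum_geometric, ENNReal.one_sub_inv_two]
    simp
  filter_upwards [ae_eventually_notMem hsum] with ω hω
  intro ε hε
  rw [eventually_atTop] at hω
  obtain ⟨K, hK⟩ := hω
  obtain ⟨k₀, hk₀⟩ := exists_nat_gt ε⁻¹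
  set k := max K k₀ with hk
  have hωk := hK k (le_max_left _ _)
  refine ⟨m k, fun n => ?_⟩
  have hnot : ¬ ((((k + 1 : ℕ) : ℝ))⁻¹ ≤ empAvg X (B (m k)) ω n) := fun hcon => hωk ⟨n, hcon⟩
  have hlt := not_le.1 hnot
  have h2 : ε⁻¹ < ((k + 1 : ℕ) : ℝ) :=
    hk₀.trans_le (by exact_mod_cast Nat.le_succ_of_le (le_max_right K k₀))
  have h3 : (((k + 1 : ℕ) : ℝ))⁻¹ < ε := by
    rw [← inv_inv ε]
    exact inv_strictAnti₀ (inv_pos.2 hε) h2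
  exact hlt.trans h3
end

section
/- Let μ be a Borel probability measure on a Hausdorff topological space S. Then μ is Radon (inner regular with respect to compact sets on all Borel sets) if and only if μ is tight and outer regular on all compact sets. -/
open MeasureTheory ProbabilityTheory Filter Finset Topology

open scoped ENNReal NNReal

section RadonAux

variable {S : Type*} [TopologicalSpace S] [T2Space S] [MeasurableSpace S] [BorelSpace S]
  (μ : Measure S) [IsProbabilityMeasure μ]

private lemma tight_compl (ht : IsTightMeasure μ) {ε : ℝ≥0∞} (hε : 0 < ε) :
    ∃ K : Set S, IsCompact K ∧ μ Kᶜ ≤ ε := by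
  obtain ⟨r, hr0, hrε⟩ : ∃ r : ℝ, 0 < r ∧ ENNReal.ofReal r ≤ ε := by
    rcases eq_or_ne ε ∞ with h | h
    · exact ⟨1, one_pos, by simp [h]⟩
    · exact ⟨ε.toReal, ENNReal.toReal_pos hε.ne' h, by rw [ENNReal.ofReal_toReal h]⟩
  obtain ⟨K, hK, hKμ⟩ := ht r hr0
  refine ⟨K, hK, ?_⟩
  have h1 : (1 : ℝ≥0∞) ≤ ENNReal.ofReal r + μ K := by
    calc (1:ℝ≥0∞) ≤ 1 - ENNReal.ofReal r + ENNReal.ofReal r := le_tsub_add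
    _ ≤ μ K + ENNReal.ofReal r := add_le_add hKμ.le le_rfl
    _ = ENNReal.ofReal r + μ K := add_comm _ _
  have h2 : μ Kᶜ = 1 - μ K := by
    rw [measure_compl hK.isClosed.measurableSet (measure_ne_top μ K), measure_univ]
  rw [h2]
  exact le_trans (tsub_le_iff_right.mpr h1) hrε

private lemma outer_open (hreg : OuterRegularOnCompacts μ)
    {K : Set S} (hK : IsCompact K) {ε : ℝ≥0∞} (hε : 0 < ε) :
    ∃ O : Set S, IsOpen O ∧ K ⊆ O ∧ μ (O \ K) < ε := by
  have h1 : (⨅ O ∈ {O : Set S | IsOpen O ∧ K ⊆ O}, μ O) < μ K + ε := by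
    rw [← hreg K hK]; exact ENNReal.lt_add_right (measure_ne_top μ K) hε.ne'
  simp only [iInf_lt_iff, Set.mem_setOf_eq] at h1
  obtain ⟨O, ⟨hO, hKO⟩, hOμ⟩ := h1
  exact ⟨O, hO, hKO,
    measure_diff_lt_of_lt_add hK.isClosed.measurableSet.nullMeasurableSet hKO
      (measure_ne_top μ K) hOμ⟩

private lemma inner_closed (ht : IsTightMeasure μ) {F : Set S} (hF : IsClosed F)
    {ε : ℝ≥0∞} (hε : 0 < ε) :
    ∃ K : Set S, IsCompact K ∧ K ⊆ F ∧ μ (F \ K) ≤ ε := by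
  obtain ⟨K₀, hK₀, hK₀μ⟩ := tight_compl μ ht hε
  refine ⟨K₀ ∩ F, hK₀.inter_right hF, Set.inter_subset_right, ?_⟩
  refine le_trans (measure_mono ?_) hK₀μ
  intro x hx
  simp only [Set.mem_diff, Set.mem_inter_iff, not_and, Set.mem_compl_iff] at *
  tauto

private lemma inner_open (ht : IsTightMeasure μ) (hreg : OuterRegularOnCompacts μ)
    {O : Set S} (hO : IsOpen O) {ε : ℝ≥0∞} (hε : 0 < ε) :
    ∃ K : Set S, IsCompact K ∧ K ⊆ O ∧ μ (O \ K) ≤ ε := by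
  have hε2 : (0 : ℝ≥0∞) < ε / 2 := ENNReal.div_pos hε.ne' (by norm_num)
  obtain ⟨K₀, hK₀, hK₀μ⟩ := tight_compl μ ht hε2
  obtain ⟨U, hU, hsub, hUμ⟩ := outer_open μ hreg (hK₀.diff hO) hε2
  refine ⟨K₀ \ U, hK₀.diff hU, ?_, ?_⟩
  · intro x hx
    by_contra hxO
    exact hx.2 (hsub ⟨hx.1, hxO⟩)
  · have hss : O \ (K₀ \ U) ⊆ K₀ᶜ ∪ (U \ (K₀ \ O)) := by
      intro x hx
      obtain ⟨hxO, hx2⟩ := hx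
      by_cases hxK : x ∈ K₀
      · right
        refine ⟨?_, fun h => h.2 hxO⟩
        by_contra hxU
        exact hx2 ⟨hxK, hxU⟩
      · exact Or.inl hxK
    calc μ (O \ (K₀ \ U)) ≤ μ K₀ᶜ + μ (U \ (K₀ \ O)) :=
          le_trans (measure_mono hss) (measure_union_le _ _)
    _ ≤ ε / 2 + ε / 2 := add_le_add hK₀μ hUμ.le
    _ = ε := ENNReal.add_halves ε

private lemma radon_of (ht : IsTightMeasure μ) (hreg : OuterRegularOnCompacts μ) :
    IsRadon μ := by
  set P : Set S → Prop := fun B => ∀ ε : ℝ≥0∞, 0 < ε →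
    ∃ K O : Set S, IsCompact K ∧ IsOpen O ∧ K ⊆ B ∧ B ⊆ O ∧ μ (O \ K) ≤ ε with hP
  have hPopen : ∀ O : Set S, IsOpen O → P O := by
    intro O hO ε hε
    obtain ⟨K, hK, hKO, hKμ⟩ := inner_open μ ht hreg hO hε
    exact ⟨K, O, hK, hO, hKO, subset_rfl, hKμ⟩
  have hPcompl : ∀ B : Set S, P B → P Bᶜ := by
    intro B hB ε hε
    have hε2 : (0 : ℝ≥0∞) < ε / 2 := ENNReal.div_pos hε.ne' (by norm_num)
    obtain ⟨K, O, hK, hO, hKB, hBO, hμ⟩ := hB (ε/2) hε2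
    obtain ⟨K', hK', hK'O, hK'μ⟩ := inner_closed μ ht hO.isClosed_compl hε2
    refine ⟨K', Kᶜ, hK', hK.isClosed.isOpen_compl,
      hK'O.trans (Set.compl_subset_compl.mpr hBO),
      Set.compl_subset_compl.mpr hKB, ?_⟩
    have hss : Kᶜ \ K' ⊆ (O \ K) ∪ (Oᶜ \ K') := by
      intro x hx
      by_cases hxO : x ∈ O
      · exact Or.inl ⟨hxO, hx.1⟩
      · exact Or.inr ⟨hxO, hx.2⟩
    calc μ (Kᶜ \ K') ≤ μ (O \ K) + μ (Oᶜ \ K') :=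
          le_trans (measure_mono hss) (measure_union_le _ _)
    _ ≤ ε / 2 + ε / 2 := add_le_add hμ hK'μ
    _ = ε := ENNReal.add_halves ε
  have hPunion : ∀ f : ℕ → Set S, (∀ n, P (f n)) → P (⋃ n, f n) := by
    intro f hf ε hε
    have hε2 : (0 : ℝ≥0∞) < ε / 2 := ENNReal.div_pos hε.ne' (by norm_num)
    obtain ⟨δ, hδpos, hδsum⟩ := ENNReal.exists_pos_sum_of_countable hε2.ne' ℕ
    choose K O hK hO hKf hfO hμ using fun n => hf n (δ n) (ENNReal.coe_pos.mpr (hδpos n))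
    set T : Set S := ⋃ n, K n with hT
    have hTmeas : ∀ n : ℕ, NullMeasurableSet (T \ ⋃ i ∈ Finset.range n, K i) μ := by
      intro n
      refine MeasurableSet.nullMeasurableSet ?_
      exact (MeasurableSet.iUnion fun i => (hK i).isClosed.measurableSet).diff
        (MeasurableSet.biUnion (Finset.range n).countable_toSet
          fun i _ => (hK i).isClosed.measurableSet)
    have hanti : Antitone fun n : ℕ => T \ ⋃ i ∈ Finset.range n, K i := fun a b hab =>
      Set.diff_subset_diff_right (Set.iUnion₂_mono' fun i hi =>
        ⟨i, Finset.mem_range.mpr (lt_of_lt_of_le (Finset.mem_range.mp hi) hab), subset_rfl⟩)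
    have hInter : (⋂ n : ℕ, T \ ⋃ i ∈ Finset.range n, K i) = ∅ := by
      rw [Set.eq_empty_iff_forall_notMem]
      intro x hx
      obtain ⟨n, hn⟩ := Set.mem_iUnion.mp (Set.mem_iInter.mp hx 0).1
      exact (Set.mem_iInter.mp hx (n + 1)).2
        (Set.mem_biUnion (Finset.self_mem_range_succ n) hn)
    have htend : Tendsto (fun n : ℕ => μ (T \ ⋃ i ∈ Finset.range n, K i)) atTop (nhds 0) := by
      have h3 := MeasureTheory.tendsto_measure_iInter_atTop hTmeas hanti ⟨0, measure_ne_top μ _⟩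
      rw [hInter, measure_empty] at h3
      exact h3
    obtain ⟨N, hN⟩ := (htend.eventually_lt_const hε2).exists
    refine ⟨⋃ i ∈ Finset.range N, K i, ⋃ n, O n,
      (Finset.range N).finite_toSet.isCompact_biUnion (fun i _ => hK i),
      isOpen_iUnion hO,
      Set.iUnion₂_subset fun i _ => (hKf i).trans (Set.subset_iUnion f i),
      Set.iUnion_mono hfO, ?_⟩
    have hss : (⋃ n, O n) \ (⋃ i ∈ Finset.range N, K i) ⊆
        ((⋃ n, O n) \ T) ∪ (T \ ⋃ i ∈ Finset.range N, K i) := by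
      intro x hx
      by_cases hxT : x ∈ T
      · exact Or.inr ⟨hxT, hx.2⟩
      · exact Or.inl ⟨hx.1, hxT⟩
    have h4 : μ ((⋃ n, O n) \ T) ≤ ε / 2 := by
      have hss2 : (⋃ n, O n) \ T ⊆ ⋃ n, (O n \ K n) := by
        intro x hx
        obtain ⟨n, hn⟩ := Set.mem_iUnion.mp hx.1
        exact Set.mem_iUnion.mpr ⟨n, hn, fun h => hx.2 (Set.mem_iUnion.mpr ⟨n, h⟩)⟩
      calc μ ((⋃ n, O n) \ T) ≤ μ (⋃ n, (O n \ K n)) := measure_mono hss2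
      _ ≤ ∑' n, μ (O n \ K n) := measure_iUnion_le _
      _ ≤ ∑' n, (δ n : ℝ≥0∞) := ENNReal.tsum_le_tsum fun n => hμ n
      _ ≤ ε / 2 := hδsum.le
    calc μ ((⋃ n, O n) \ ⋃ i ∈ Finset.range N, K i)
        ≤ μ ((⋃ n, O n) \ T) + μ (T \ ⋃ i ∈ Finset.range N, K i) :=
          le_trans (measure_mono hss) (measure_union_le _ _)
    _ ≤ ε / 2 + ε / 2 := add_le_add h4 hN.le
    _ = ε := ENNReal.add_halves ε
  intro B hBmeas
  have hPB : P B := by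
    have hle : (inferInstance : MeasurableSpace S) ≤
        (⟨P, hPopen ∅ isOpen_empty, hPcompl, hPunion⟩ : MeasurableSpace S) := by
      rw [BorelSpace.measurable_eq (α := S)]
      exact MeasurableSpace.generateFrom_le fun t ht => hPopen t ht
    exact hle B hBmeas
  refine le_antisymm ?_ (iSup₂_le fun K hK => measure_mono hK.2)
  refine ENNReal.le_of_forall_pos_le_add fun ε hε _ => ?_
  obtain ⟨K, O, hK, hO, hKB, hBO, hμ⟩ := hPB ε (ENNReal.coe_pos.mpr hε)
  calc μ B ≤ μ (K ∪ (O \ K)) := measure_mono (fun x hx => by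
        by_cases h : x ∈ K
        · exact Or.inl h
        · exact Or.inr ⟨hBO hx, h⟩)
  _ ≤ μ K + μ (O \ K) := measure_union_le _ _
  _ ≤ (⨆ C ∈ {C : Set S | IsCompact C ∧ C ⊆ B}, μ C) + ε :=
      add_le_add (le_iSup₂_of_le K ⟨hK, hKB⟩ le_rfl) hμ

end RadonAux

/-- A Borel probability measure on a Hausdorff space is Radon iff it is tight and
outer regular on compact sets. -/
theorem stmt9 {S : Type*} [TopologicalSpace S] [T2Space S] [MeasurableSpace S] [BorelSpace S]
    (μ : Measure S) [IsProbabilityMeasure μ] :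
    IsRadon μ ↔ IsTightMeasure μ ∧ OuterRegularOnCompacts μ := by
  constructor
  · intro h
    constructor
    · intro ε hε
      have h1 := h Set.univ MeasurableSet.univ
      rw [measure_univ] at h1
      have h2 : 1 - ENNReal.ofReal ε < ⨆ K ∈ {K : Set S | IsCompact K ∧ K ⊆ Set.univ}, μ K := by
        rw [← h1]
        exact ENNReal.sub_lt_self ENNReal.one_ne_top one_ne_zero (ENNReal.ofReal_pos.mpr hε).ne'
      simp only [lt_iSup_iff, Set.mem_setOf_eq] at h2
      obtain ⟨K, ⟨hK, -⟩, hKμ⟩ := h2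
      exact ⟨K, hK, hKμ⟩
    · intro K hK
      refine le_antisymm (le_iInf₂ fun O hO => measure_mono hO.2) ?_
      refine ENNReal.le_of_forall_pos_le_add fun ε hε _ => ?_
      have hεpos : (0 : ℝ≥0∞) < ε := ENNReal.coe_pos.mpr hε
      have hKc := h Kᶜ hK.isClosed.measurableSet.compl
      have hexists : ∃ C : Set S, IsCompact C ∧ C ⊆ Kᶜ ∧ μ Kᶜ < μ C + ε := by
        rcases eq_or_ne (μ Kᶜ) 0 with h0 | h0
        · refine ⟨∅, isCompact_empty, Set.empty_subset _, ?_⟩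
          rw [h0]
          exact lt_of_lt_of_le hεpos le_add_self
        · have h3 : μ Kᶜ - ε < ⨆ C ∈ {C : Set S | IsCompact C ∧ C ⊆ Kᶜ}, μ C := by
            rw [← hKc]
            exact ENNReal.sub_lt_self (measure_ne_top μ _) h0 hεpos.ne'
          simp only [lt_iSup_iff, Set.mem_setOf_eq] at h3
          obtain ⟨C, ⟨hC, hCK⟩, hCμ⟩ := h3
          refine ⟨C, hC, hCK, ?_⟩
          calc μ Kᶜ ≤ μ Kᶜ - ε + ε := le_tsub_add
          _ < μ C + ε := ENNReal.add_lt_add_right ENNReal.coe_ne_top hCμ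
      obtain ⟨C, hC, hCK, hlt⟩ := hexists
      have hdiff : μ (Kᶜ \ C) < ε :=
        measure_diff_lt_of_lt_add hC.isClosed.measurableSet.nullMeasurableSet hCK
          (measure_ne_top μ C) hlt
      refine le_trans (iInf₂_le Cᶜ ⟨hC.isClosed.isOpen_compl, Set.subset_compl_comm.mp hCK⟩) ?_
      calc μ Cᶜ ≤ μ (K ∪ (Kᶜ \ C)) := measure_mono (fun x hx => by
            by_cases h5 : x ∈ K
            · exact Or.inl h5
            · exact Or.inr ⟨h5, hx⟩)
      _ ≤ μ K + μ (Kᶜ \ C) := measure_union_le _ _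
      _ ≤ μ K + ε := add_le_add le_rfl hdiff.le
  · rintro ⟨ht, hreg⟩
    exact radon_of μ ht hreg
end

section
/- Let κ be a Markov kernel from (Ω, 𝒢) to (S, 𝒮) and suppose that for every A ∈ 𝒮 and P-almost every ω, lim_n (1/n) Σ_{i≤n} 1{X_i(ω) ∈ A} = κ(ω, A), where (X_n) is an exchangeable sequence on (Ω, Σ, P) with 𝒢 ⊆ E_∞. Then for all m, all A_1,...,A_m ∈ 𝒮, and all E ∈ 𝒢: ∫_E ∏_{i=1}^m κ(ω, A_i) dP(ω) = P(E ∩ {X_1 ∈ A_1, ..., X_m ∈ A_m}). -/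
open MeasureTheory ProbabilityTheory Filter Finset Topology

section Aux
variable {Ω S : Type*} [mΩ : MeasurableSpace Ω] [MeasurableSpace S]

lemma exists_perm_extend {m : ℕ} (j : Fin m → ℕ) (hj : Function.Injective j) :
    ∃ π : Equiv.Perm ℕ, (∀ i : Fin m, π i = j i) ∧ ∃ N, ∀ k ≥ N, π k = k := by
  classical
  obtain ⟨N, hmN, hjN⟩ : ∃ N, m ≤ N ∧ ∀ i : Fin m, j i < N :=
    ⟨m + Finset.univ.sup j + 1, by omega, fun i => by
      have := Finset.le_sup (f := j) (Finset.mem_univ i); omega⟩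
  set p : Fin N → Prop := fun k => (k : ℕ) < m with hp
  set q : Fin N → Prop := fun k => ∃ i : Fin m, j i = (k : ℕ) with hq
  have hbij : Function.Bijective (fun x : {x : Fin N // p x} =>
      (⟨⟨j ⟨(x : Fin N), x.2⟩, hjN _⟩, ⟨⟨(x : Fin N), x.2⟩, rfl⟩⟩ : {x : Fin N // q x})) := by
    constructor
    · rintro ⟨⟨a, ha⟩, hpa⟩ ⟨⟨b, hb⟩, hpb⟩ h
      simp only [Subtype.mk.injEq, Fin.mk.injEq] at h
      have := hj h
      exact Subtype.ext (Fin.ext (by simpa using congrArg Fin.val this))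
    · rintro ⟨⟨k, hk⟩, ⟨i, hi⟩⟩
      refine ⟨⟨⟨(i : ℕ), lt_of_lt_of_le i.2 hmN⟩, i.2⟩, ?_⟩
      refine Subtype.ext (Fin.ext ?_)
      simpa using hi
  let e : {x : Fin N // p x} ≃ {x : Fin N // q x} := Equiv.ofBijective _ hbij
  let σ' : Equiv.Perm (Fin N) := e.extendSubtype
  let π : Equiv.Perm ℕ := σ'.extendDomain Fin.equivSubtype
  refine ⟨π, fun i => ?_, N, fun k hk => ?_⟩
  · have hiN : (i : ℕ) < N := lt_of_lt_of_le i.2 hmN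
    have h1 : π (i : ℕ) = ((Fin.equivSubtype (σ' (Fin.equivSubtype.symm ⟨(i : ℕ), hiN⟩)) : {x : ℕ // x < N}) : ℕ) :=
      Equiv.Perm.extendDomain_apply_subtype σ' Fin.equivSubtype hiN
    have h2 : Fin.equivSubtype.symm ⟨(i : ℕ), hiN⟩ = (⟨(i : ℕ), hiN⟩ : Fin N) := rfl
    have hmem : p (⟨(i : ℕ), hiN⟩ : Fin N) := i.2
    have h3 : σ' (⟨(i : ℕ), hiN⟩ : Fin N) = ↑(e ⟨⟨(i : ℕ), hiN⟩, hmem⟩) :=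
      Equiv.extendSubtype_apply_of_mem e _ hmem
    rw [h1, h2, h3]
    show ((⟨j ⟨(i : ℕ), hmem⟩, hjN _⟩ : Fin N) : ℕ) = j i
    simp
  · exact Equiv.Perm.extendDomain_apply_not_subtype σ' Fin.equivSubtype (by omega)

end Aux
section Aux2
variable {Ω S : Type*} [mΩ : MeasurableSpace Ω] [MeasurableSpace S]

lemma exch_repr (X : ℕ → Ω → S) {E : Set Ω} (hE : MeasurableSet[exchangeableSigma X] E) :
    ∃ A : Set (ℕ → S), MeasurableSet A ∧
      (∀ π : Equiv.Perm ℕ, (∃ N, ∀ m ≥ N, π m = m) →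
        (fun s : ℕ → S => fun i => s (π i)) ⁻¹' A = A) ∧
      E = (fun ω i => X i ω) ⁻¹' A := by
  have hE' : MeasurableSpace.GenerateMeasurable
      {B | ∃ A : Set (ℕ → S), MeasurableSet A ∧
        (∀ π : Equiv.Perm ℕ, (∃ N, ∀ m ≥ N, π m = m) →
          (fun s : ℕ → S => fun i => s (π i)) ⁻¹' A = A) ∧
        B = (fun ω i => X i ω) ⁻¹' A} E := hE
  clear hE
  induction hE' with
  | basic u hu => exact hu
  | empty => exact ⟨∅, MeasurableSet.empty, fun π _ => by simp, by simp⟩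
  | compl u _ ih =>
      obtain ⟨A, hA, hinv, rfl⟩ := ih
      exact ⟨Aᶜ, hA.compl, fun π hπ => by rw [Set.preimage_compl, hinv π hπ],
        by rw [Set.preimage_compl]⟩
  | iUnion f _ ih =>
      choose A hA hinv hrep using ih
      refine ⟨⋃ n, A n, MeasurableSet.iUnion hA, fun π hπ => ?_, ?_⟩
      · rw [Set.preimage_iUnion]
        exact Set.iUnion_congr fun n => hinv n π hπ
      · rw [Set.preimage_iUnion]
        exact Set.iUnion_congr fun n => hrep n

lemma exchangeableSigma_le (X : ℕ → Ω → S) (hX : ∀ n, Measurable (X n)) :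
    exchangeableSigma X ≤ mΩ := by
  refine MeasurableSpace.generateFrom_le ?_
  rintro B ⟨A, hA, -, rfl⟩
  exact measurable_pi_lambda _ hX hA

lemma map_seq_perm (P : Measure Ω) [IsProbabilityMeasure P] (X : ℕ → Ω → S)
    (hX : ∀ n, Measurable (X n)) (hexch : Exchangeable P X)
    (π : Equiv.Perm ℕ) {N₀ : ℕ} (hπ : ∀ k ≥ N₀, π k = k) :
    P.map (fun ω i => X i ω) = P.map (fun ω i => X (π i) ω) := by
  have hseq : Measurable (fun ω (i : ℕ) => X i ω) := measurable_pi_lambda _ hX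
  have hseqπ : Measurable (fun ω (i : ℕ) => X (π i) ω) := measurable_pi_lambda _ fun i => hX _
  have hPmap : IsProbabilityMeasure (P.map (fun ω (i : ℕ) => X i ω)) :=
    Measure.isProbabilityMeasure_map hseq.aemeasurable
  refine MeasureTheory.ext_of_generate_finite _ generateFrom_measurableCylinders.symm
    isPiSystem_measurableCylinders (fun t ht => ?_)
    (by rw [Measure.map_apply hseq MeasurableSet.univ,
            Measure.map_apply hseqπ MeasurableSet.univ]; simp)
  obtain ⟨s, S₀, hS₀, rfl⟩ := (mem_measurableCylinders t).mp ht
  obtain ⟨N, hNs, hN₀⟩ : ∃ N, (∀ i ∈ s, i < N) ∧ N₀ ≤ N :=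
    ⟨max (s.sup id + 1) N₀, fun i hi => lt_of_lt_of_le
      (Nat.lt_succ_of_le (Finset.le_sup (f := id) hi)) (le_max_left _ _), le_max_right _ _⟩
  have hsymm : ∀ k ≥ N₀, π.symm k = k := fun k hk => by
    conv_lhs => rw [← hπ k hk]
    simp
  have hmaps : ∀ k : Fin N, π (k : ℕ) < N := by
    intro k
    by_contra h
    push_neg at h
    have h1 : π.symm (π (k : ℕ)) = π (k : ℕ) := hsymm _ (le_trans hN₀ h)
    rw [Equiv.symm_apply_apply] at h1
    have := k.2
    omega
  -- restriction of π to Fin N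
  have hginj : Function.Injective (fun k : Fin N => (⟨π (k : ℕ), hmaps k⟩ : Fin N)) := by
    intro a b hab
    simp only [Fin.mk.injEq] at hab
    exact Fin.ext (π.injective hab)
  let σ : Equiv.Perm (Fin N) :=
    Equiv.ofBijective _ (Finite.injective_iff_bijective.mp hginj)
  have hσval : ∀ k : Fin N, ((σ k : Fin N) : ℕ) = π (k : ℕ) := fun k => rfl
  have hseqN : Measurable (fun ω (k : Fin N) => X (k : ℕ) ω) :=
    measurable_pi_lambda _ fun k => hX _
  have hseqσ : Measurable (fun ω (k : Fin N) => X ((σ k : Fin N) : ℕ) ω) :=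
    measurable_pi_lambda _ fun k => hX _
  have hR : Measurable (fun g : Fin N → S => (fun i : s => g ⟨(i : ℕ), hNs i i.2⟩)) :=
    measurable_pi_lambda _ fun i => measurable_pi_apply _
  set D : Set (Fin N → S) := (fun g : Fin N → S => (fun i : s => g ⟨(i : ℕ), hNs i i.2⟩)) ⁻¹' S₀
    with hD
  have hDmeas : MeasurableSet D := hR hS₀
  have hcyl : MeasurableSet (cylinder s S₀ : Set (ℕ → S)) := hS₀.cylinder
  have e1 : (fun ω (i : ℕ) => X i ω) ⁻¹' cylinder s S₀
      = (fun ω (k : Fin N) => X (k : ℕ) ω) ⁻¹' D := rfl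
  have e2 : (fun ω (i : ℕ) => X (π i) ω) ⁻¹' cylinder s S₀
      = (fun ω (k : Fin N) => X ((σ k : Fin N) : ℕ) ω) ⁻¹' D := rfl
  rw [Measure.map_apply hseq hcyl, Measure.map_apply hseqπ hcyl, e1, e2,
    ← Measure.map_apply hseqN hDmeas, ← Measure.map_apply hseqσ hDmeas, hexch N σ]

end Aux2
section Aux3
variable {Ω S : Type*} [mΩ : MeasurableSpace Ω] [MeasurableSpace S]

lemma key_tuple (P : Measure Ω) [IsProbabilityMeasure P] (X : ℕ → Ω → S)
    (hX : ∀ n, Measurable (X n)) (hexch : Exchangeable P X)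
    {A : Set (ℕ → S)} (hA : MeasurableSet A)
    (hAinv : ∀ π : Equiv.Perm ℕ, (∃ N, ∀ m ≥ N, π m = m) →
        (fun s : ℕ → S => fun i => s (π i)) ⁻¹' A = A)
    {m : ℕ} (B : Fin m → Set S) (hB : ∀ i, MeasurableSet (B i))
    {j : Fin m → ℕ} (hj : Function.Injective j) :
    P ((fun ω i => X i ω) ⁻¹' A ∩ ⋂ i, {ω | X (j i) ω ∈ B i}) =
    P ((fun ω i => X i ω) ⁻¹' A ∩ ⋂ i, {ω | X (i : ℕ) ω ∈ B i}) := by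
  obtain ⟨π, hπj, N₀, hπ⟩ := exists_perm_extend j hj
  have hseq : Measurable (fun ω (i : ℕ) => X i ω) := measurable_pi_lambda _ hX
  have hseqπ : Measurable (fun ω (i : ℕ) => X (π i) ω) := measurable_pi_lambda _ fun i => hX _
  set C : Set (ℕ → S) := A ∩ ⋂ i : Fin m, {f : ℕ → S | f (i : ℕ) ∈ B i} with hCdef
  have hCmeas : MeasurableSet C :=
    hA.inter (MeasurableSet.iInter fun i => measurable_pi_apply (i : ℕ) (hB i))
  have e1 : (fun ω (i : ℕ) => X (π i) ω) ⁻¹' C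
      = (fun ω i => X i ω) ⁻¹' A ∩ ⋂ i, {ω | X (j i) ω ∈ B i} := by
    rw [hCdef, Set.preimage_inter]
    congr 1
    · show (fun ω i => X i ω) ⁻¹' ((fun f : ℕ → S => fun i => f (π i)) ⁻¹' A) = _
      rw [hAinv π ⟨N₀, hπ⟩]
    · rw [Set.preimage_iInter]
      exact Set.iInter_congr fun i => by
        show {ω | X (π (i : ℕ)) ω ∈ B i} = {ω | X (j i) ω ∈ B i}
        rw [hπj i]
  have e2 : (fun ω (i : ℕ) => X i ω) ⁻¹' C
      = (fun ω i => X i ω) ⁻¹' A ∩ ⋂ i, {ω | X (i : ℕ) ω ∈ B i} := by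
    rw [hCdef, Set.preimage_inter, Set.preimage_iInter]; rfl
  rw [← e1, ← e2, ← Measure.map_apply hseqπ hCmeas, ← Measure.map_apply hseq hCmeas,
    map_seq_perm P X hX hexch π hπ]

end Aux3
section Aux4
variable {Ω S : Type*} [mΩ : MeasurableSpace Ω] [MeasurableSpace S]

lemma empAvg_nonneg (X : ℕ → Ω → S) (B : Set S) (ω : Ω) (n : ℕ) :
    0 ≤ empAvg X B ω n := by
  apply div_nonneg _ (Nat.cast_nonneg n)
  exact Finset.sum_nonneg fun k _ => Set.indicator_nonneg (fun _ _ => zero_le_one) _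

lemma empAvg_le_one (X : ℕ → Ω → S) (B : Set S) (ω : Ω) (n : ℕ) :
    empAvg X B ω n ≤ 1 := by
  rcases n with - | n
  · simp [empAvg]
  · rw [empAvg, div_le_one (by positivity)]
    calc (∑ i ∈ Finset.range (n+1), B.indicator (fun _ => (1:ℝ)) (X i ω))
        ≤ ∑ i ∈ Finset.range (n+1), 1 := by
          refine Finset.sum_le_sum fun k _ => ?_
          by_cases h : X k ω ∈ B
          · rw [Set.indicator_of_mem h]
          · rw [Set.indicator_of_notMem h]; exact zero_le_one
      _ = ((n:ℝ) + 1) := by simp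
      _ = ((n+1 : ℕ) : ℝ) := by push_cast; ring

lemma card_inj_filter (m n : ℕ) :
    ((Finset.univ : Finset (Fin m → Fin n)).filter (fun p => Function.Injective p)).card
      = n.descFactorial m := by
  classical
  rw [← Fintype.card_subtype]
  rw [Fintype.card_congr (Equiv.subtypeInjectiveEquivEmbedding (Fin m) (Fin n))]
  rw [Fintype.card_embedding_eq]
  simp

lemma ratio_tendsto (m : ℕ) :
    Filter.Tendsto (fun n : ℕ => (n.descFactorial m : ℝ) / (n:ℝ)^m) atTop (𝓝 1) := by
  have h : ∀ᶠ n : ℕ in atTop,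
      (∏ i ∈ Finset.range m, (1 - (i:ℝ)/(n:ℝ))) = (n.descFactorial m : ℝ) / (n:ℝ)^m := by
    filter_upwards [eventually_ge_atTop m, eventually_ge_atTop 1] with n hnm hn1
    rw [Nat.descFactorial_eq_prod_range, Nat.cast_prod,
      show ((n:ℝ))^m = ∏ _i ∈ Finset.range m, (n:ℝ) by rw [Finset.prod_const, Finset.card_range],
      ← Finset.prod_div_distrib]
    refine Finset.prod_congr rfl fun i hi => ?_
    have hin : i ≤ n := le_trans (le_of_lt (Finset.mem_range.mp hi)) hnm
    have hn0 : (n:ℝ) ≠ 0 := by positivity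
    rw [Nat.cast_sub hin, sub_div, div_self hn0]
  refine Filter.Tendsto.congr' h ?_
  have h2 : Filter.Tendsto (fun n : ℕ => ∏ i ∈ Finset.range m, (1 - (i:ℝ)/(n:ℝ))) atTop
      (𝓝 (∏ _i ∈ Finset.range m, (1:ℝ))) := by
    refine tendsto_finset_prod _ fun i _ => ?_
    have := tendsto_const_div_atTop_nhds_zero_nat (i:ℝ)
    simpa using tendsto_const_nhds.sub this
  simpa using h2

end Aux4
open scoped ENNReal
lemma stmt15_core {Ω S : Type*} [mΩ : MeasurableSpace Ω] [MeasurableSpace S]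
    (P : Measure Ω) [IsProbabilityMeasure P] (X : ℕ → Ω → S) (hX : ∀ n, Measurable (X n))
    (hexch : Exchangeable P X) {m : ℕ} (A : Fin m → Set S) (hA : ∀ i, MeasurableSet (A i))
    {E : Set Ω} (hE : MeasurableSet[exchangeableSigma X] E)
    (F : Fin m → Ω → ℝ≥0∞) (hFm : ∀ i, Measurable (F i)) (hF1 : ∀ i ω, F i ω ≤ 1)
    (hFconv : ∀ i, ∀ᵐ ω ∂P,
      Filter.Tendsto (fun n => empAvg X (A i) ω n) Filter.atTop (𝓝 ((F i ω).toReal))) :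
    ∫⁻ ω in E, ∏ i, F i ω ∂P = P (E ∩ ⋂ i, {ω | X i ω ∈ A i}) := by
  classical
  obtain ⟨A0, hA0, hA0inv, hErep⟩ := exch_repr X hE
  have hEmeas : MeasurableSet E := by
    rw [hErep]; exact measurable_pi_lambda _ hX hA0
  set c : ℝ≥0∞ := P (E ∩ ⋂ i, {ω | X (i : ℕ) ω ∈ A i}) with hcdef
  have hc_ne_top : c ≠ ⊤ := (measure_lt_top _ _).ne
  have hc1 : c ≤ 1 := prob_le_one
  set g : Ω → ℝ := fun ω => ∏ i, (F i ω).toReal with hgdef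
  have hκm : ∀ i, Measurable fun ω => (F i ω).toReal := fun i => (hFm i).ennreal_toReal
  have hg : Measurable g := Finset.measurable_prod _ fun i _ => hκm i
  have hκ1 : ∀ (ω : Ω) i, F i ω ≤ 1 := fun ω i => hF1 i ω
  have hg01 : ∀ ω, 0 ≤ g ω ∧ g ω ≤ 1 := fun ω =>
    ⟨Finset.prod_nonneg fun i _ => ENNReal.toReal_nonneg,
     Finset.prod_le_one (fun i _ => ENNReal.toReal_nonneg) (fun i _ => by
      calc (F i ω).toReal ≤ (1:ℝ≥0∞).toReal :=
            ENNReal.toReal_mono ENNReal.one_ne_top (hκ1 ω i)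
        _ = 1 := by simp)⟩
  have hFmeas : ∀ n : ℕ, Measurable fun ω => ∏ i, empAvg X (A i) ω n := by
    intro n
    refine Finset.measurable_prod _ fun i _ => ?_
    unfold empAvg
    exact (Finset.measurable_sum _ fun k _ =>
      (measurable_const.indicator (hA i)).comp (hX k)).div_const _
  have hF01 : ∀ n ω, 0 ≤ (∏ i, empAvg X (A i) ω n) ∧ (∏ i, empAvg X (A i) ω n) ≤ 1 :=
    fun n ω => ⟨Finset.prod_nonneg fun i _ => empAvg_nonneg X (A i) ω n,
      Finset.prod_le_one (fun i _ => empAvg_nonneg X (A i) ω n)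
        (fun i _ => empAvg_le_one X (A i) ω n)⟩
  have hae : ∀ᵐ ω ∂P, Filter.Tendsto (fun n => ∏ i, empAvg X (A i) ω n) atTop (𝓝 (g ω)) := by
    have h' := MeasureTheory.ae_all_iff.mpr fun i : Fin m => hFconv i
    filter_upwards [h'] with ω hω
    exact tendsto_finset_prod _ fun i _ => hω i
  have hDCT : Filter.Tendsto (fun n => ∫ ω in E, ∏ i, empAvg X (A i) ω n ∂P) atTop
      (𝓝 (∫ ω in E, g ω ∂P)) := by
    refine MeasureTheory.tendsto_integral_of_dominated_convergence (fun _ => (1:ℝ))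
      (fun n => ((hFmeas n).aestronglyMeasurable)) (integrable_const 1)
      (fun n => Filter.Eventually.of_forall fun ω => ?_) (ae_restrict_of_ae hae)
    rw [Real.norm_eq_abs, abs_of_nonneg (hF01 n ω).1]
    exact (hF01 n ω).2
  have hfun : ∀ (n : ℕ) (p : Fin m → Fin n) (ω : Ω),
      (∏ i, (A i).indicator (fun _ => (1:ℝ)) (X (p i) ω))
        = Set.indicator (⋂ i, {ω' | X ((p i : ℕ)) ω' ∈ A i}) (fun _ => (1:ℝ)) ω := by
    intro n p ω
    by_cases h : ω ∈ ⋂ i, {ω' | X ((p i : ℕ)) ω' ∈ A i}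
    · rw [Set.indicator_of_mem h]
      refine Finset.prod_eq_one fun i _ => ?_
      rw [Set.indicator_of_mem (by exact Set.mem_iInter.mp h i)]
    · rw [Set.indicator_of_notMem h]
      obtain ⟨i, hi⟩ : ∃ i, X ((p i : ℕ)) ω ∉ A i := by
        simpa [Set.mem_iInter] using h
      exact Finset.prod_eq_zero (Finset.mem_univ i) (Set.indicator_of_notMem hi _)
  have hBmeas : ∀ (n : ℕ) (p : Fin m → Fin n),
      MeasurableSet (⋂ i, {ω' | X ((p i : ℕ)) ω' ∈ A i}) :=
    fun n p => MeasurableSet.iInter fun i => (hX _) (hA i)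
  have hterm : ∀ (n : ℕ) (p : Fin m → Fin n),
      ∫ ω in E, ∏ i, (A i).indicator (fun _ => (1:ℝ)) (X (p i) ω) ∂P
        = (P (E ∩ ⋂ i, {ω' | X ((p i : ℕ)) ω' ∈ A i})).toReal := by
    intro n p
    rw [MeasureTheory.integral_congr_ae (Filter.Eventually.of_forall fun ω => hfun n p ω),
      MeasureTheory.setIntegral_indicator (hBmeas n p), MeasureTheory.setIntegral_const,
      smul_eq_mul, mul_one]
    rfl
  have hexpand : ∀ n : ℕ,
      (∫ ω in E, ∏ i, empAvg X (A i) ω n ∂P)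
        = (∑ p : Fin m → Fin n,
            (P (E ∩ ⋂ i, {ω' | X ((p i : ℕ)) ω' ∈ A i})).toReal) / (n:ℝ)^m := by
    intro n
    have h1 : ∀ ω, (∏ i, empAvg X (A i) ω n)
        = (∑ p : Fin m → Fin n, ∏ i, (A i).indicator (fun _ => (1:ℝ)) (X (p i) ω)) / (n:ℝ)^m := by
      intro ω
      unfold empAvg
      rw [Finset.prod_div_distrib, Finset.prod_const, Finset.card_univ, Fintype.card_fin]
      congr 1
      calc ∏ i, ∑ k ∈ Finset.range n, (A i).indicator (fun _ => (1:ℝ)) (X k ω)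
          = ∏ i, ∑ k : Fin n, (A i).indicator (fun _ => (1:ℝ)) (X (k:ℕ) ω) := by
            refine Finset.prod_congr rfl fun i _ => ?_
            exact (Fin.sum_univ_eq_sum_range _ n).symm
        _ = ∑ p ∈ Fintype.piFinset (fun _ : Fin m => (Finset.univ : Finset (Fin n))),
              ∏ i, (A i).indicator (fun _ => (1:ℝ)) (X (p i) ω) := Finset.prod_univ_sum _ _
        _ = ∑ p : Fin m → Fin n, ∏ i, (A i).indicator (fun _ => (1:ℝ)) (X (p i) ω) := by
            rw [Fintype.piFinset_univ]
    simp_rw [h1]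
    rw [integral_div]
    congr 1
    rw [MeasureTheory.integral_finset_sum]
    · exact Finset.sum_congr rfl fun p _ => hterm n p
    · intro p _
      have heq : (fun ω => ∏ i, (A i).indicator (fun _ => (1:ℝ)) (X (p i) ω))
          = Set.indicator (⋂ i, {ω' | X ((p i : ℕ)) ω' ∈ A i}) (fun _ => (1:ℝ)) :=
        funext (hfun n p)
      rw [heq]
      exact (integrable_const (1:ℝ)).indicator (hBmeas n p)
  have hc' : 0 ≤ c.toReal ∧ c.toReal ≤ 1 := ⟨ENNReal.toReal_nonneg, by
    calc c.toReal ≤ (1:ℝ≥0∞).toReal := ENNReal.toReal_mono ENNReal.one_ne_top hc1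
      _ = 1 := by simp⟩
  have hest : ∀ n : ℕ, 1 ≤ n →
      |(∫ ω in E, ∏ i, empAvg X (A i) ω n ∂P) - c.toReal|
        ≤ 1 - (n.descFactorial m : ℝ)/(n:ℝ)^m := by
    intro n hn
    rw [hexpand n]
    set t : (Fin m → Fin n) → ℝ :=
      fun p => (P (E ∩ ⋂ i, {ω' | X ((p i : ℕ)) ω' ∈ A i})).toReal with htdef
    have ht0 : ∀ p, 0 ≤ t p := fun p => ENNReal.toReal_nonneg
    have ht1 : ∀ p, t p ≤ 1 := fun p => by
      calc t p ≤ (1:ℝ≥0∞).toReal := ENNReal.toReal_mono ENNReal.one_ne_top prob_le_one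
        _ = 1 := by simp
    have htinj : ∀ p ∈ (Finset.univ : Finset (Fin m → Fin n)).filter
        (fun p => Function.Injective p), t p = c.toReal := by
      intro p hp
      have hpinj : Function.Injective p := (Finset.mem_filter.mp hp).2
      have hkey := key_tuple P X hX hexch hA0 hA0inv A hA (Fin.val_injective.comp hpinj)
      show (P (E ∩ ⋂ i, {ω' | X ((p i : ℕ)) ω' ∈ A i})).toReal = c.toReal
      rw [hcdef, hErep]
      exact congrArg ENNReal.toReal hkey
    rw [← Finset.sum_filter_add_sum_filter_not Finset.univ (fun p => Function.Injective p) t,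
      Finset.sum_congr rfl htinj, Finset.sum_const, card_inj_filter, nsmul_eq_mul]
    set d := ((n.descFactorial m : ℕ) : ℝ) with hd
    set Nn := ((n:ℝ))^m with hNn
    have hNn0 : 0 < Nn := by positivity
    set R := ∑ p ∈ (Finset.univ : Finset (Fin m → Fin n)).filter
      (fun p => ¬ Function.Injective p), t p with hRdef
    have hR0 : 0 ≤ R := Finset.sum_nonneg fun p _ => ht0 p
    have hcardle : (n.descFactorial m) ≤ n^m := Nat.descFactorial_le_pow n m
    have hRle : R ≤ Nn - d := by
      have h2 : R ≤ (((Finset.univ : Finset (Fin m → Fin n)).filter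
          (fun p => ¬ Function.Injective p)).card : ℝ) * 1 := by
        simpa using Finset.sum_le_card_nsmul _ _ 1 (fun p _ => ht1 p)
      have hcard : ((Finset.univ : Finset (Fin m → Fin n)).filter
          (fun p => ¬ Function.Injective p)).card = n^m - n.descFactorial m := by
        have h3 := Finset.card_filter_add_card_filter_not
          (s := (Finset.univ : Finset (Fin m → Fin n))) (p := fun p => Function.Injective p)
        rw [card_inj_filter] at h3
        have hcu : (Finset.univ : Finset (Fin m → Fin n)).card = n^m := by
          simp [Finset.card_univ]
        omega
      rw [hcard] at h2
      calc R ≤ ((n^m - n.descFactorial m : ℕ) : ℝ) * 1 := h2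
        _ = Nn - d := by rw [Nat.cast_sub hcardle]; push_cast; ring
    have hdle : d ≤ Nn := by
      calc d ≤ ((n^m : ℕ) : ℝ) := Nat.cast_le.mpr hcardle
        _ = Nn := by push_cast; ring
    have key : (d * c.toReal + R)/Nn - c.toReal = (R - (Nn - d) * c.toReal)/Nn := by
      field_simp
      ring
    rw [key, abs_div, abs_of_pos hNn0, div_le_iff₀ hNn0]
    have habs : |R - (Nn - d) * c.toReal| ≤ Nn - d := by
      rw [abs_le]
      constructor <;> nlinarith [hc'.1, hc'.2]
    calc |R - (Nn - d)*c.toReal| ≤ Nn - d := habs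
      _ = (1 - d/Nn) * Nn := by field_simp
  have hlim2 : Filter.Tendsto (fun n => ∫ ω in E, ∏ i, empAvg X (A i) ω n ∂P) atTop
      (𝓝 c.toReal) := by
    have h0 : Filter.Tendsto (fun n : ℕ => 1 - (n.descFactorial m : ℝ)/(n:ℝ)^m) atTop (𝓝 0) := by
      have h1 : Filter.Tendsto (fun n : ℕ => (1:ℝ) - (n.descFactorial m : ℝ)/(n:ℝ)^m) atTop
          (𝓝 (1 - 1)) := Filter.Tendsto.const_sub _ (ratio_tendsto m)
      simpa using h1
    have habs : Filter.Tendsto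
        (fun n => |(∫ ω in E, ∏ i, empAvg X (A i) ω n ∂P) - c.toReal|) atTop (𝓝 0) :=
      squeeze_zero' (Filter.Eventually.of_forall fun n => abs_nonneg _)
        (by filter_upwards [eventually_ge_atTop 1] with n hn using hest n hn) h0
    rw [← tendsto_sub_nhds_zero_iff]
    exact (tendsto_zero_iff_abs_tendsto_zero _).mpr habs
  have hEg : ∫ ω in E, g ω ∂P = c.toReal := tendsto_nhds_unique hDCT hlim2
  have hint : Integrable g (P.restrict E) := by
    refine MeasureTheory.Integrable.mono' (integrable_const 1) hg.aestronglyMeasurable ?_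
    exact Filter.Eventually.of_forall fun ω => by
      rw [Real.norm_eq_abs, abs_of_nonneg (hg01 ω).1]; exact (hg01 ω).2
  have hprod : ∀ ω, (∏ i, F i ω) = ENNReal.ofReal (g ω) := by
    intro ω
    show ∏ i, F i ω = ENNReal.ofReal (∏ i, (F i ω).toReal)
    rw [← ENNReal.toReal_prod, ENNReal.ofReal_toReal]
    exact (ENNReal.prod_lt_top fun i _ =>
      lt_of_le_of_lt (hκ1 ω i) ENNReal.one_lt_top).ne
  calc ∫⁻ ω in E, ∏ i, F i ω ∂P
      = ∫⁻ ω in E, ENNReal.ofReal (g ω) ∂P := by simp_rw [hprod]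
    _ = ENNReal.ofReal (∫ ω in E, g ω ∂P) :=
        (MeasureTheory.ofReal_integral_eq_lintegral_ofReal hint
          (Filter.Eventually.of_forall fun ω => (hg01 ω).1)).symm
    _ = ENNReal.ofReal c.toReal := by rw [hEg]
    _ = c := ENNReal.ofReal_toReal hc_ne_top

/-- If the empirical measures converge a.s. to `κ(·, A)` for every measurable `A`,
where `𝒢 ⊆ E∞`, then `κ^∞` reproduces the finite-dimensional distributions of the
exchangeable sequence on sets of `𝒢`. -/
theorem stmt15 {Ω S : Type*} [mΩ : MeasurableSpace Ω] [MeasurableSpace S]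
    (P : Measure Ω) [IsProbabilityMeasure P] (X : ℕ → Ω → S) (hX : ∀ n, Measurable (X n))
    (hexch : Exchangeable P X) (𝒢 : MeasurableSpace Ω) (h𝒢 : 𝒢 ≤ exchangeableSigma X)
    (κ : @Kernel Ω S 𝒢 _) (hκ : @IsMarkovKernel Ω S 𝒢 _ κ)
    (hconv : ∀ A : Set S, MeasurableSet A →
      ∀ᵐ ω ∂P, Filter.Tendsto (fun n => empAvg X A ω n) Filter.atTop (𝓝 ((κ ω A).toReal))) :
    ∀ (m : ℕ) (A : Fin m → Set S), (∀ i, MeasurableSet (A i)) →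
      ∀ E : Set Ω, MeasurableSet[𝒢] E →
        ∫⁻ ω in E, ∏ i, κ ω (A i) ∂P = P (E ∩ ⋂ i, {ω | X i ω ∈ A i}) := by
  intro m A hA E hE
  refine stmt15_core (mΩ := mΩ) P X hX hexch A hA (h𝒢 E hE) (fun i ω => κ ω (A i)) ?_ ?_ ?_
  · intro i
    exact Measurable.mono (@Kernel.measurable_coe Ω S 𝒢 _ κ (A i) (hA i))
      (le_trans h𝒢 (exchangeableSigma_le (mΩ := mΩ) X hX)) le_rfl
  · intro i ω
    have : IsProbabilityMeasure (κ ω) := hκ.isProbabilityMeasure ω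
    exact prob_le_one
  · intro i
    exact hconv (A i) (hA i)
end
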